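/- arXiv:1203.0953 — 6 statements merged into one kernel-verified Lean document; each statement's English description precedes it below -/
import Mathlib

section
/- The Amice transform μ ↦ Φ_μ is a bijection (indeed an isomorphism of W-modules) from the set of W-valued p-adic measures on ℤ_p onto the ring of formal power series W[[T]]. -/
set_option linter.unusedSectionVars false

set_option synthInstance.maxHeartbeats 1000000
set_option maxHeartbeats 1000000

variable (p : ℕ) [Fact p.Prime]

variable (K : Type*) [NontriviallyNormedField K] [CompleteSpace K]
  [IsUltrametricDist K] [NormedAlgebra ℚ_[p] K]

/-- The ring of integers `W = {x ∈ K : |x| ≤ 1}` of `K`. -/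
def IntegerRing : Subring K where
  carrier := {x : K | ‖x‖ ≤ 1}
  mul_mem' := fun {a b} ha hb => by
    simp only [Set.mem_setOf_eq] at *
    calc ‖a * b‖ = ‖a‖ * ‖b‖ := norm_mul a b
    _ ≤ 1 := mul_le_one₀ ha (norm_nonneg b) hb
  one_mem' := by simp
  add_mem' := fun {a b} ha hb =>
    le_trans (IsUltrametricDist.norm_add_le_max a b) (max_le ha hb)
  zero_mem' := by simp
  neg_mem' := fun {a} ha => by simpa using ha

/-- A `W`-valued `p`-adic measure on `ℤ_p`: a continuous `W`-linear functional on the space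
`C(ℤ_p, W)` of continuous `W`-valued functions on `ℤ_p`. -/
abbrev PadicMeasure := C(ℤ_[p], IntegerRing K) →L[IntegerRing K] IntegerRing K

/-- The canonical (isometric) embedding `ℤ_p → W`. -/
noncomputable def toIntegerRing : ℤ_[p] →+* IntegerRing K where
  toFun x := ⟨algebraMap ℚ_[p] K (x : ℚ_[p]), by
    show ‖algebraMap ℚ_[p] K (x : ℚ_[p])‖ ≤ 1
    rw [norm_algebraMap']
    exact x.2⟩
  map_one' := by ext; simp
  map_mul' := fun x y => by ext; push_cast; simp
  map_zero' := by ext; simp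
  map_add' := fun x y => by ext; push_cast; simp

theorem continuous_toIntegerRing : Continuous (toIntegerRing p K) := by
  apply Continuous.subtype_mk
  exact (continuous_algebraMap ℚ_[p] K).comp continuous_subtype_val

/-- The binomial coefficient function `x ↦ C(x, n) = x(x-1)⋯(x-n+1)/n!`, as a continuous
`W`-valued function on `ℤ_p`. -/
noncomputable def binomC (n : ℕ) : C(ℤ_[p], IntegerRing K) :=
  ⟨fun x => toIntegerRing p K (Ring.choose x n),
    (continuous_toIntegerRing p K).comp (PadicInt.continuous_choose n)⟩

/-- The monomial function `x ↦ x ^ m`, as a continuous `W`-valued function on `ℤ_p`. -/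
noncomputable def monomC (m : ℕ) : C(ℤ_[p], IntegerRing K) :=
  ⟨fun x => toIntegerRing p K (x ^ m),
    (continuous_toIntegerRing p K).comp (continuous_pow m)⟩

/-- The Amice transform `Φ_μ(T) = Σ_n (∫ C(x,n) dμ) Tⁿ ∈ W[[T]]` of a measure `μ`. -/
noncomputable def amiceTransform (μ : PadicMeasure p K) : PowerSeries (IntegerRing K) :=
  PowerSeries.mk fun n => μ (binomC p K n)

/-! ### Auxiliary development for the proof -/

open Filter IsUltrametricDist

namespace AmiceAux

/-- Generic lemma: iterated forward differences commute with additive maps. -/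
lemma fwdDiff_iter_map {M G G' : Type*} [AddCommMonoid M] [AddCommGroup G] [AddCommGroup G']
    (φ : G →+ G') (h : M) (f : M → G) (n : ℕ) (x : M) :
    (fwdDiff h)^[n] (fun y => φ (f y)) x = φ ((fwdDiff h)^[n] f x) := by
  induction n generalizing f with
  | zero => simp
  | succ n ih =>
    rw [Function.iterate_succ_apply, Function.iterate_succ_apply]
    have : (fwdDiff h fun y => φ (f y)) = fun y => φ (fwdDiff h f y) := by
      funext y; simp [fwdDiff, map_sub]
    rw [this, ih]

variable (p : ℕ) [Fact p.Prime]
variable (K : Type*) [NontriviallyNormedField K] [CompleteSpace K]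
  [IsUltrametricDist K] [NormedAlgebra ℚ_[p] K]

noncomputable instance : Algebra ℤ_[p] K :=
  ((algebraMap ℚ_[p] K).comp PadicInt.Coe.ringHom).toAlgebra

instance : IsBoundedSMul ℤ_[p] K :=
  IsBoundedSMul.of_norm_smul_le fun r x => by
    rw [Algebra.smul_def, RingHom.algebraMap_toAlgebra, norm_mul, RingHom.comp_apply,
      norm_algebraMap']
    rfl

/-- The inclusion `C(ℤ_p, W) →+ C(ℤ_p, K)`. -/
noncomputable def incl : C(ℤ_[p], IntegerRing K) →+ C(ℤ_[p], K) where
  toFun f := ⟨fun x => (f x : K), continuous_subtype_val.comp f.continuous⟩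
  map_zero' := by ext x; simp
  map_add' f g := by ext x; simp

@[simp] lemma incl_apply (f : C(ℤ_[p], IntegerRing K)) (x : ℤ_[p]) :
    incl p K f x = (f x : K) := rfl

lemma isometry_incl : Isometry (incl p K) := by
  refine Isometry.of_dist_eq fun f g => ?_
  refine le_antisymm ?_ ?_
  · rw [ContinuousMap.dist_le dist_nonneg]
    intro x
    rw [incl_apply, incl_apply, ← Subtype.dist_eq]
    exact ContinuousMap.dist_apply_le_dist x
  · rw [ContinuousMap.dist_le dist_nonneg]
    intro x
    rw [Subtype.dist_eq]
    exact ContinuousMap.dist_apply_le_dist (f := incl p K f) (g := incl p K g) x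

lemma norm_incl_le_one (f : C(ℤ_[p], IntegerRing K)) : ‖incl p K f‖ ≤ 1 := by
  rw [ContinuousMap.norm_le _ zero_le_one]
  intro x
  exact (f x).2

/-- The Mahler coefficients of `f : C(ℤ_p, W)`, as elements of `W`. -/
noncomputable def mcoeff (f : C(ℤ_[p], IntegerRing K)) (n : ℕ) : IntegerRing K :=
  (fwdDiff 1)^[n] (⇑f) 0

lemma mcoeff_coe (f : C(ℤ_[p], IntegerRing K)) (n : ℕ) :
    ((mcoeff p K f n : IntegerRing K) : K) = (fwdDiff 1)^[n] (⇑(incl p K f)) 0 := by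
  exact (fwdDiff_iter_map ((IntegerRing K).subtype).toAddMonoidHom 1 (⇑f) n 0).symm

lemma norm_mcoeff_le (f : C(ℤ_[p], IntegerRing K)) (n : ℕ) :
    ‖(mcoeff p K f n : K)‖ ≤ ‖incl p K f‖ := by
  rw [mcoeff_coe]
  exact norm_fwdDiff_iter_apply_le 1 (incl p K f) 0 n

lemma tendsto_mcoeff (f : C(ℤ_[p], IntegerRing K)) :
    Tendsto (fun n => ((mcoeff p K f n : K))) atTop (nhds 0) := by
  have := PadicInt.fwdDiff_tendsto_zero (incl p K f)
  simpa only [← mcoeff_coe] using this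

lemma mcoeff_add (f g : C(ℤ_[p], IntegerRing K)) (n : ℕ) :
    mcoeff p K (f + g) n = mcoeff p K f n + mcoeff p K g n := by
  simp only [mcoeff, ContinuousMap.coe_add, fwdDiff_iter_add, Pi.add_apply]

lemma mcoeff_smul (r : IntegerRing K) (f : C(ℤ_[p], IntegerRing K)) (n : ℕ) :
    mcoeff p K (r • f) n = r * mcoeff p K f n := by
  simp only [mcoeff, ContinuousMap.coe_smul, fwdDiff_iter_const_smul, Pi.smul_apply,
    smul_eq_mul]

/-- `mcoeff` of the binomial coefficient functions: `mcoeff (binomC n) k = δ_{nk}`. -/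
lemma mcoeff_binomC (n k : ℕ) :
    mcoeff p K (binomC p K n) k = if k = n then 1 else 0 := by
  have key : (fwdDiff (1 : ℤ_[p]))^[k] (fun x : ℤ_[p] => Ring.choose x n) 0
      = if k = n then 1 else 0 := by
    have hZ := congrArg (fun z : ℤ => ((z : ℤ_[p]))) (fwdDiff_iter_choose_zero n k)
    rw [fwdDiff_iter_eq_sum_shift] at hZ
    rw [fwdDiff_iter_eq_sum_shift]
    simp only [zero_add, smul_eq_mul, nsmul_eq_mul, mul_one, Nat.cast_id,
      Ring.choose_natCast, zsmul_eq_mul] at hZ ⊢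
    push_cast at hZ ⊢
    convert hZ using 1
  have h2 : mcoeff p K (binomC p K n) k
      = toIntegerRing p K ((fwdDiff (1 : ℤ_[p]))^[k] (fun x : ℤ_[p] => Ring.choose x n) 0) :=
    fwdDiff_iter_map (toIntegerRing p K).toAddMonoidHom 1
      (fun x : ℤ_[p] => Ring.choose x n) k 0
  rw [h2, key]
  split <;> simp

/-- `f` is the sum of its Mahler series, in `C(ℤ_p, W)`. -/
lemma hasSum_mahler_W (f : C(ℤ_[p], IntegerRing K)) :
    HasSum (fun n => mcoeff p K f n • binomC p K n) f := by
  have hK := PadicInt.hasSum_mahler (incl p K f)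
  have key : ∀ n, incl p K (mcoeff p K f n • binomC p K n)
      = PadicInt.mahlerTerm ((fwdDiff 1)^[n] (⇑(incl p K f)) 0) n := by
    intro n
    ext x
    rw [incl_apply, PadicInt.mahlerTerm_apply, ← mcoeff_coe, mahler_apply, Algebra.smul_def]
    exact mul_comm _ _
  rw [HasSum]
  have hemb := (isometry_incl p K).isEmbedding
  rw [hemb.tendsto_nhds_iff]
  have : ((incl p K) ∘ fun s : Finset ℕ => ∑ n ∈ s, mcoeff p K f n • binomC p K n)
      = fun s : Finset ℕ => ∑ n ∈ s, PadicInt.mahlerTerm ((fwdDiff 1)^[n] (⇑(incl p K f)) 0) n := by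
    funext s
    simp only [Function.comp_apply, map_sum, key]
  rw [this]
  exact hK

/-- Summability of the pairing series. -/
lemma summable_pair (a : ℕ → IntegerRing K) (f : C(ℤ_[p], IntegerRing K)) :
    Summable (fun n => ((a n : K)) * ((mcoeff p K f n : K))) := by
  apply NonarchimedeanAddGroup.summable_of_tendsto_cofinite_zero
  rw [Nat.cofinite_eq_atTop, tendsto_zero_iff_norm_tendsto_zero]
  have h1 : Tendsto (fun n => ‖(mcoeff p K f n : K)‖) atTop (nhds 0) :=
    tendsto_zero_iff_norm_tendsto_zero.mp (tendsto_mcoeff p K f)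
  refine squeeze_zero (fun n => norm_nonneg _) (fun n => ?_) h1
  rw [norm_mul]
  exact mul_le_of_le_one_left (norm_nonneg _) (a n).2

/-- The pairing `∑ aₙ·(mcoeff f)ₙ ∈ K`. -/
noncomputable def pairK (a : ℕ → IntegerRing K) (f : C(ℤ_[p], IntegerRing K)) : K :=
  ∑' n, ((a n : K)) * ((mcoeff p K f n : K))

lemma norm_pairK_le (a : ℕ → IntegerRing K) (f : C(ℤ_[p], IntegerRing K)) :
    ‖pairK p K a f‖ ≤ ‖incl p K f‖ := by
  refine norm_tsum_le_of_forall_le_of_nonneg (norm_nonneg _) fun n => ?_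
  rw [norm_mul]
  calc ‖(a n : K)‖ * ‖(mcoeff p K f n : K)‖ ≤ 1 * ‖incl p K f‖ :=
        mul_le_mul (a n).2 (norm_mcoeff_le p K f n) (norm_nonneg _) zero_le_one
  _ = ‖incl p K f‖ := one_mul _

lemma pairK_mem (a : ℕ → IntegerRing K) (f : C(ℤ_[p], IntegerRing K)) :
    pairK p K a f ∈ IntegerRing K :=
  le_trans (norm_pairK_le p K a f) (norm_incl_le_one p K f)

/-- The measure attached to a sequence of coefficients, as a linear map. -/
noncomputable def measL (a : ℕ → IntegerRing K) :
    C(ℤ_[p], IntegerRing K) →ₗ[IntegerRing K] IntegerRing K where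
  toFun f := ⟨pairK p K a f, pairK_mem p K a f⟩
  map_add' f g := by
    ext
    push_cast
    show pairK p K a (f + g) = pairK p K a f + pairK p K a g
    rw [pairK, pairK, pairK, ← Summable.tsum_add (summable_pair p K a f) (summable_pair p K a g)]
    refine tsum_congr fun n => ?_
    rw [mcoeff_add]
    push_cast
    ring
  map_smul' r f := by
    ext
    push_cast
    show pairK p K a (r • f) = (r : K) * pairK p K a f
    rw [pairK, pairK, ← tsum_mul_left]
    refine tsum_congr fun n => ?_
    rw [mcoeff_smul]
    push_cast
    ring

lemma lipschitz_measL (a : ℕ → IntegerRing K) : LipschitzWith 1 (measL p K a) := by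
  refine LipschitzWith.of_dist_le_mul fun f g => ?_
  simp only [NNReal.coe_one, one_mul]
  have h1 : dist (measL p K a f) (measL p K a g)
      = ‖pairK p K a f - pairK p K a g‖ := by
    rw [Subtype.dist_eq, dist_eq_norm]
    rfl
  have h2 : pairK p K a f - pairK p K a g = pairK p K a (f - g) := by
    have h := congrArg (fun w : IntegerRing K => (w : K)) (map_sub (measL p K a) f g)
    push_cast at h
    exact h.symm
  rw [h1, h2]
  calc ‖pairK p K a (f - g)‖ ≤ ‖incl p K (f - g)‖ := norm_pairK_le p K a _
  _ = ‖incl p K f - incl p K g‖ := by rw [map_sub]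
  _ = dist (incl p K f) (incl p K g) := (dist_eq_norm _ _).symm
  _ = dist f g := (isometry_incl p K).dist_eq f g

/-- The measure attached to a sequence of coefficients. -/
noncomputable def meas (a : ℕ → IntegerRing K) : PadicMeasure p K :=
  ⟨measL p K a, (lipschitz_measL p K a).continuous⟩

lemma meas_apply (a : ℕ → IntegerRing K) (f : C(ℤ_[p], IntegerRing K)) :
    ((meas p K a f : IntegerRing K) : K) = pairK p K a f := rfl

/-- Evaluating `meas a` on the binomial functions recovers the coefficients. -/
lemma meas_binomC (a : ℕ → IntegerRing K) (n : ℕ) :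
    meas p K a (binomC p K n) = a n := by
  ext
  rw [meas_apply, pairK]
  have : ∀ k, ((a k : K)) * ((mcoeff p K (binomC p K n) k : K))
      = if k = n then ((a n : K)) else 0 := by
    intro k
    rw [mcoeff_binomC]
    split
    · next h => subst h; simp
    · simp
  rw [tsum_congr this, tsum_ite_eq]

/-- `meas` inverts the Amice transform. -/
lemma meas_amice (μ : PadicMeasure p K) (f : C(ℤ_[p], IntegerRing K)) :
    meas p K (fun n => μ (binomC p K n)) f = μ f := by
  have h1 : HasSum (fun n => mcoeff p K f n • binomC p K n) f := hasSum_mahler_W p K f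
  have h2 : HasSum (fun n => μ (mcoeff p K f n • binomC p K n)) (μ f) := μ.hasSum h1
  have h3 : HasSum (fun n => mcoeff p K f n * μ (binomC p K n)) (μ f) := by
    simpa only [map_smul, smul_eq_mul] using h2
  have h4 : HasSum (fun n => ((mcoeff p K f n : K)) * ((μ (binomC p K n) : K)))
      ((μ f : K)) := by
    have := h3.map ((IntegerRing K).subtype) continuous_subtype_val
    simpa [Function.comp_def] using this
  ext
  rw [meas_apply, pairK]
  rw [← h4.tsum_eq]
  exact tsum_congr fun n => mul_comm _ _

end AmiceAux

/-- The Amice transform `μ ↦ Φ_μ` is a bijection — indeed an isomorphism of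
`W`-modules — from the space of `W`-valued `p`-adic measures on `ℤ_p` onto `W[[T]]`. -/
theorem amiceTransform_bijective :
    ∃ e : PadicMeasure p K ≃ₗ[IntegerRing K] PowerSeries (IntegerRing K),
      ∀ μ : PadicMeasure p K, e μ = amiceTransform p K μ := by
  classical
  refine ⟨LinearEquiv.ofLinear
    ({ toFun := amiceTransform p K
       map_add' := fun μ ν => by
         ext n
         simp [amiceTransform]
       map_smul' := fun r μ => by
         ext n
         simp [amiceTransform] } :
      PadicMeasure p K →ₗ[IntegerRing K] PowerSeries (IntegerRing K))
    ({ toFun := fun F => AmiceAux.meas p K (fun n => PowerSeries.coeff n F)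
       map_add' := fun F G => by
         apply ContinuousLinearMap.ext
         intro f
         ext
         push_cast
         show AmiceAux.pairK p K _ f = AmiceAux.pairK p K _ f + AmiceAux.pairK p K _ f
         rw [AmiceAux.pairK, AmiceAux.pairK, AmiceAux.pairK,
           ← Summable.tsum_add (AmiceAux.summable_pair p K _ f)
             (AmiceAux.summable_pair p K _ f)]
         refine tsum_congr fun n => ?_
         rw [map_add]
         push_cast
         ring
       map_smul' := fun r F => by
         apply ContinuousLinearMap.ext
         intro f
         ext
         push_cast
         show AmiceAux.pairK p K _ f = (r : K) * AmiceAux.pairK p K _ f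
         rw [AmiceAux.pairK, AmiceAux.pairK, ← tsum_mul_left]
         refine tsum_congr fun n => ?_
         rw [map_smul, smul_eq_mul]
         push_cast
         ring } :
      PowerSeries (IntegerRing K) →ₗ[IntegerRing K] PadicMeasure p K)
    ?_ ?_, fun μ => rfl⟩
  · apply LinearMap.ext
    intro F
    ext n
    simp only [LinearMap.coe_comp, Function.comp_apply, LinearMap.coe_mk, AddHom.coe_mk,
      LinearMap.id_coe, id_eq]
    rw [amiceTransform, PowerSeries.coeff_mk, AmiceAux.meas_binomC]
  · apply LinearMap.ext
    intro μ
    apply ContinuousLinearMap.ext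
    intro f
    simp only [LinearMap.coe_comp, Function.comp_apply, LinearMap.coe_mk, AddHom.coe_mk,
      LinearMap.id_coe, id_eq]
    have : (fun n => PowerSeries.coeff n (amiceTransform p K μ))
        = fun n => μ (binomC p K n) := by
      funext n; rw [amiceTransform, PowerSeries.coeff_mk]
    rw [this, AmiceAux.meas_amice]
end

section
/- Let μ be a W-valued p-adic measure on ℤ_p and let u ∈ W with |u−1| < 1. Then the series u^x := Σ_{n≥0} C(x,n)(u−1)^n converges uniformly on ℤ_p and defines a continuous function ℤ_p → W, and ∫_{ℤ_p} u^x dμ(x) = Σ_{n≥0} (∫_{ℤ_p} C(x,n) dμ(x))·(u−1)^n; that is, the integral of the character x ↦ u^x equals the (convergent) evaluation Φ_μ(u−1) of the Amice transform at u−1. -/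
set_option linter.unusedSectionVars false

set_option synthInstance.maxHeartbeats 1000000
set_option maxHeartbeats 1000000

variable (p : ℕ) [Fact p.Prime]

variable (K : Type*) [NontriviallyNormedField K] [CompleteSpace K]
  [IsUltrametricDist K] [NormedAlgebra ℚ_[p] K]

/-- For `u ∈ W` with `|u−1| < 1`, the series `u^x = Σ_n C(x,n)(u−1)^n`
converges uniformly on `ℤ_p` to a continuous function `f : ℤ_p → W`, and
`∫ u^x dμ = Σ_n (∫ C(x,n) dμ)·(u−1)^n = Φ_μ(u−1)`. -/
theorem integral_character_eq_amice_eval (μ : PadicMeasure p K)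
    (u : IntegerRing K) (hu : ‖(u : K) - 1‖ < 1) :
    ∃ f : C(ℤ_[p], IntegerRing K),
      TendstoUniformly
        (fun N (x : ℤ_[p]) => ∑ n ∈ Finset.range N, binomC p K n x * (u - 1) ^ n)
        (⇑f) Filter.atTop ∧
      HasSum (fun n => μ (binomC p K n) * (u - 1) ^ n) (μ f) := by
  haveI : CompleteSpace (IntegerRing K) := by
    have hcl : IsClosed {x : K | ‖x‖ ≤ 1} := isClosed_le continuous_norm continuous_const
    exact hcl.completeSpace_coe
  have hu' : ‖(u - 1 : IntegerRing K)‖ < 1 := by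
    rw [AddSubgroupClass.coe_norm]; push_cast; exact hu
  have hnormpow : ∀ n : ℕ, ‖((u - 1) ^ n : IntegerRing K)‖ = ‖(u - 1 : IntegerRing K)‖ ^ n := by
    intro n
    rw [AddSubgroupClass.coe_norm, AddSubgroupClass.coe_norm]
    push_cast
    exact norm_pow _ _
  set g : ℕ → C(ℤ_[p], IntegerRing K) :=
    fun n => binomC p K n * ContinuousMap.const _ ((u - 1) ^ n) with hg_def
  have hgle : ∀ n, ‖g n‖ ≤ ‖(u - 1 : IntegerRing K)‖ ^ n := by
    intro n
    refine (ContinuousMap.norm_le _ (pow_nonneg (norm_nonneg _) n)).2 fun x => ?_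
    calc ‖(g n) x‖ ≤ ‖binomC p K n x‖ * ‖((u - 1) ^ n : IntegerRing K)‖ := norm_mul_le _ _
      _ ≤ 1 * ‖(u - 1 : IntegerRing K)‖ ^ n := by
          rw [hnormpow]
          exact mul_le_mul_of_nonneg_right ((binomC p K n x).2) (pow_nonneg (norm_nonneg _) n)
      _ = _ := one_mul _
  have hg : Summable g :=
    Summable.of_norm (Summable.of_nonneg_of_le (fun n => norm_nonneg _) hgle
      (summable_geometric_of_lt_one (norm_nonneg _) hu'))
  obtain ⟨f, hf⟩ := hg
  refine ⟨f, ?_, ?_⟩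
  · have ht := hf.tendsto_sum_nat
    rw [ContinuousMap.tendsto_iff_tendstoUniformly] at ht
    convert ht using 2 with N x
    simp [hg_def]
  · have hsum := μ.hasSum hf
    convert hsum using 2 with n
    have hgn : g n = (u - 1) ^ n • binomC p K n := by
      ext x
      simp [hg_def, mul_comm]
    rw [hgn, map_smul, smul_eq_mul, mul_comm]
end

section
/- Let n ≥ 1, fix a primitive p^n-th root of unity ζ ∈ W, and let φ: (ℤ/p^nℤ)^× → W^× be a primitive Dirichlet character modulo p^n (i.e. one that does not factor through (ℤ/p^{n−1}ℤ)^×), extended by zero to all of ℤ/p^nℤ and then to ℤ_p via reduction modulo p^n. Set G(φ) = Σ_{a ∈ (ℤ/p^nℤ)^×} φ(a)·ζ^a (the Gauss sum). Then for every W-valued p-adic measure μ on ℤ_p and every integer m ≥ 0: ∫_{ℤ_p} φ(x)·x^m dμ(x) = p^{−n}·G(φ)·Σ_{u ∈ (ℤ/p^nℤ)^×} φ(−u)^{−1}·∫_{ℤ_p} x^m·(ζ^u)^x dμ(x), an identity in K. -/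
set_option linter.unusedSectionVars false

set_option synthInstance.maxHeartbeats 1000000
set_option maxHeartbeats 1000000

variable (p : ℕ) [Fact p.Prime]

variable (K : Type*) [NontriviallyNormedField K] [CompleteSpace K]
  [IsUltrametricDist K] [NormedAlgebra ℚ_[p] K]

lemma continuous_toZModPow' (n : ℕ) : Continuous (fun x : ℤ_[p] => PadicInt.toZModPow n x) := by
  rw [continuous_discrete_rng]
  intro b
  rw [Metric.isOpen_iff]
  intro x hx
  simp only [Set.mem_preimage, Set.mem_singleton_iff] at hx
  refine ⟨(p : ℝ) ^ (-(n : ℤ)), zpow_pos (by exact_mod_cast (Fact.out : p.Prime).pos) _,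
    fun y hy => ?_⟩
  simp only [Set.mem_preimage, Set.mem_singleton_iff]
  have hmem : y - x ∈ RingHom.ker (PadicInt.toZModPow (p := p) n) := by
    rw [PadicInt.ker_toZModPow, ← PadicInt.norm_le_pow_iff_mem_span_pow]
    have hd : dist y x = ‖y - x‖ := dist_eq_norm y x
    have := le_of_lt (Metric.mem_ball.mp hy)
    rw [hd] at this
    exact_mod_cast this
  rw [RingHom.mem_ker, map_sub, sub_eq_zero] at hmem
  rw [hmem, hx]

lemma E_spec (n : ℕ) [NeZero (p ^ n)] {ζ : K} (hζpow : ζ ^ (p ^ n) = 1)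
    (u : (ZMod (p ^ n))ˣ) (E : C(ℤ_[p], IntegerRing K))
    (hE : ∀ x : ℤ_[p], HasSum
      (fun k => ((binomC p K k x : K)) * (ζ ^ ((u : ZMod (p ^ n)).val) - 1) ^ k) ((E x : K)))
    (x : ℤ_[p]) :
    (E x : K) = AddChar.zmodChar (p ^ n) hζpow ((u : ZMod (p ^ n)) * PadicInt.toZModPow n x) := by
  have key : (fun y : ℤ_[p] => (E y : K)) = fun y : ℤ_[p] =>
      AddChar.zmodChar (p ^ n) hζpow ((u : ZMod (p ^ n)) * PadicInt.toZModPow n y) := by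
    have hcont1 : Continuous fun y : ℤ_[p] => (E y : K) :=
      continuous_subtype_val.comp E.continuous
    have hcont2 : Continuous fun y : ℤ_[p] =>
        (AddChar.zmodChar (p ^ n) hζpow ((u : ZMod (p ^ n)) * PadicInt.toZModPow n y) : K) :=
      by
        have hd : Continuous fun a : ZMod (p ^ n) =>
            (AddChar.zmodChar (p ^ n) hζpow ((u : ZMod (p ^ n)) * a) : K) :=
          continuous_of_discreteTopology
        exact hd.comp (continuous_toZModPow' p n)
    refine DenseRange.equalizer PadicInt.denseRange_natCast hcont1 hcont2 (funext fun b => ?_)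
    simp only [Function.comp_apply]
    -- goal: (E (b : ℤ_[p]) : K) = zmodChar ... (u * toZModPow n (b : ℤ_[p]))
    set η : K := ζ ^ ((u : ZMod (p ^ n)).val) with hη
    have hbin : ∀ k, ((binomC p K k ((b : ℕ) : ℤ_[p]) : K)) = ((b.choose k : ℕ) : K) := by
      intro k
      show ((algebraMap ℚ_[p] K) ((Ring.choose ((b : ℤ_[p])) k : ℤ_[p]) : ℚ_[p])) = _
      rw [Ring.choose_natCast]
      push_cast
      rfl
    have h1 : HasSum (fun k => ((b.choose k : ℕ) : K) * (η - 1) ^ k) ((E (b : ℤ_[p]) : K)) := by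
      have := hE ((b : ℕ) : ℤ_[p])
      refine this.congr_fun fun k => ?_  -- maybe wrong name
      rw [hbin k]
    have h2 : HasSum (fun k => ((b.choose k : ℕ) : K) * (η - 1) ^ k)
        (∑ k ∈ Finset.range (b + 1), ((b.choose k : ℕ) : K) * (η - 1) ^ k) := by
      apply hasSum_sum_of_ne_finset_zero
      intro k hk
      rw [Nat.choose_eq_zero_of_lt (by simpa using hk), Nat.cast_zero, zero_mul]
    have h3 : ∑ k ∈ Finset.range (b + 1), ((b.choose k : ℕ) : K) * (η - 1) ^ k = η ^ b := by
      have hback : η - 1 + 1 = η := by ring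
      calc ∑ k ∈ Finset.range (b + 1), ((b.choose k : ℕ) : K) * (η - 1) ^ k
          = (η - 1 + 1) ^ b := by
            rw [add_pow]
            refine Finset.sum_congr rfl fun k _ => ?_
            rw [one_pow, mul_one, mul_comm]
        _ = η ^ b := by rw [hback]
    have hEb : (E ((b : ℕ) : ℤ_[p]) : K) = η ^ b := h1.unique (h3 ▸ h2)
    rw [hEb, map_natCast (PadicInt.toZModPow n) b, AddChar.zmodChar_apply, hη, ← pow_mul]
    have hmod : ((u : ZMod (p ^ n)) * (b : ZMod (p ^ n))).val
        = ((u : ZMod (p ^ n)).val * b) % (p ^ n) := by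
      rw [ZMod.val_mul, ZMod.val_natCast]
      exact (((Nat.mod_modEq b (p ^ n)).mul_left ((u : ZMod (p ^ n)).val)))
    rw [hmod, ← pow_eq_pow_mod _ hζpow]
  exact congrFun key x

lemma ringHomComp_factorsThrough_iff {N d : ℕ} [NeZero N]
    (φ : DirichletCharacter (IntegerRing K) N) (hd : d ∣ N) :
    DirichletCharacter.FactorsThrough (φ.ringHomComp (IntegerRing K).subtype) d ↔ φ.FactorsThrough d := by
  rw [DirichletCharacter.factorsThrough_iff_ker_unitsMap hd,
      DirichletCharacter.factorsThrough_iff_ker_unitsMap hd]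
  have h : (MulChar.toUnitHom (φ.ringHomComp (IntegerRing K).subtype)).ker
      = (MulChar.toUnitHom φ).ker := by
    ext u
    rw [MonoidHom.mem_ker, MonoidHom.mem_ker, ← Units.val_inj, ← Units.val_inj,
        MulChar.coe_toUnitHom, MulChar.coe_toUnitHom, MulChar.ringHomComp_apply,
        Units.val_one, Units.val_one]
    constructor
    · intro hh
      exact Subtype.ext (by simpa using hh)
    · intro hh
      rw [hh]; rfl
  rw [h]

lemma inv_factorsThrough_iff {F : Type*} [Field F] {N d : ℕ} [NeZero N]
    (χ : DirichletCharacter F N) (hd : d ∣ N) :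
    (χ⁻¹).FactorsThrough d ↔ χ.FactorsThrough d := by
  rw [DirichletCharacter.factorsThrough_iff_ker_unitsMap hd,
      DirichletCharacter.factorsThrough_iff_ker_unitsMap hd]
  have h : (MulChar.toUnitHom χ⁻¹).ker = (MulChar.toUnitHom χ).ker := by
    ext u
    rw [MonoidHom.mem_ker, MonoidHom.mem_ker, ← Units.val_inj, ← Units.val_inj,
        MulChar.coe_toUnitHom, MulChar.coe_toUnitHom, MulChar.inv_apply_eq_inv',
        Units.val_one, inv_eq_one]
  rw [h]

lemma factorsThrough_mono {F : Type*} [CommMonoidWithZero F] {N : ℕ} [NeZero N]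
    (χ : DirichletCharacter F N) {d d' : ℕ} (h : χ.FactorsThrough d)
    (hdd' : d ∣ d') (hd' : d' ∣ N) : χ.FactorsThrough d' := by
  have hd : d ∣ N := hdd'.trans hd'
  rw [DirichletCharacter.factorsThrough_iff_ker_unitsMap hd] at h
  rw [DirichletCharacter.factorsThrough_iff_ker_unitsMap hd']
  intro x hx
  apply h
  rw [MonoidHom.mem_ker] at hx ⊢
  rw [← ZMod.unitsMap_comp hdd' hd', MonoidHom.comp_apply, hx, map_one]

lemma isPrimitive_of_not_factorsThrough {F : Type*} [CommMonoidWithZero F]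
    (n : ℕ) (hn : 1 ≤ n) [NeZero (p ^ n)] (χ : DirichletCharacter F (p ^ n))
    (h : ¬ χ.FactorsThrough (p ^ (n - 1))) : χ.IsPrimitive := by
  rw [DirichletCharacter.isPrimitive_def]
  by_contra hne
  apply h
  have hcond := DirichletCharacter.factorsThrough_conductor χ
  have hdvd : χ.conductor ∣ p ^ n := hcond.dvd
  obtain ⟨j, hj, hcj⟩ := (Nat.dvd_prime_pow (Fact.out : p.Prime)).mp hdvd
  have hjn : j ≤ n - 1 := by
    rcases Nat.lt_or_ge j n with h' | h'
    · omega
    · exact absurd (hcj ▸ congrArg (p ^ ·) (le_antisymm hj h')) (by simpa [hcj] using hne)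
  refine factorsThrough_mono χ ?_ (pow_dvd_pow p hjn) (pow_dvd_pow p (Nat.sub_le n 1))
  rwa [← hcj]

open Finset in
lemma sum_units_eq' {M : Type*} [AddCommMonoid M] {N : ℕ} [NeZero N] (f : ZMod N → M)
    (hf : ∀ t, ¬IsUnit t → f t = 0) :
    ∑ u : (ZMod N)ˣ, f u = ∑ t : ZMod N, f t := by
  classical
  rw [← Finset.sum_filter_of_ne (p := fun t : ZMod N => IsUnit t)
      (fun x _ hx => by_contra fun h => hx (hf x h))]
  refine Finset.sum_bij (fun (u : (ZMod N)ˣ) _ => (u : ZMod N)) ?_ ?_ ?_ ?_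
  · intro u _; exact Finset.mem_filter.mpr ⟨Finset.mem_univ _, u.isUnit⟩
  · intro a _ b _ h; exact Units.ext h
  · intro t ht
    exact ⟨(Finset.mem_filter.mp ht).2.unit, Finset.mem_univ _, (Finset.mem_filter.mp ht).2.unit_spec⟩
  · intro u _; rfl
lemma gauss_self {F : Type*} [Field F] {N : ℕ} [NeZero N] (χ : DirichletCharacter F N)
    (hχ : χ.IsPrimitive) (e : AddChar (ZMod N) F) (he : e.IsPrimitive) :
    gaussSum χ e * gaussSum χ⁻¹ e = (N : F) * χ (-1) := by
  classical
  have h1 : gaussSum χ e * gaussSum χ⁻¹ e = ∑ b : ZMod N, (χ⁻¹ b * gaussSum χ e) * e b := by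
    have h : gaussSum χ⁻¹ e = ∑ b : ZMod N, χ⁻¹ b * e b := rfl
    rw [h, Finset.mul_sum]
    exact Finset.sum_congr rfl fun b _ => by ring
  have h2 : ∀ b : ZMod N, (χ⁻¹ b * gaussSum χ e) * e b
      = ∑ a : ZMod N, χ a * e (b * (a + 1)) := by
    intro b
    calc (χ⁻¹ b * gaussSum χ e) * e b = (∑ a : ZMod N, χ a * e (b * a)) * e b := by
          rw [← gaussSum_mulShift_of_isPrimitive e hχ b]
          congr 1
      _ = ∑ a : ZMod N, χ a * e (b * (a + 1)) := by
          rw [Finset.sum_mul]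
          exact Finset.sum_congr rfl fun a _ => by
            rw [mul_assoc, ← AddChar.map_add_eq_mul, mul_add, mul_one]
  rw [h1]
  simp_rw [h2]
  rw [Finset.sum_comm]
  have h3 : ∀ a : ZMod N, ∑ b : ZMod N, χ a * e (b * (a + 1))
      = if a = -1 then χ a * (Fintype.card (ZMod N) : F) else 0 := by
    intro a
    rw [← Finset.mul_sum, AddChar.sum_mulShift _ he, apply_ite (Nat.cast : ℕ → F), Nat.cast_zero]
    by_cases ha : a = -1
    · rw [if_pos (by rw [ha]; ring), if_pos ha]
    · rw [if_neg (fun h => ha (by rwa [add_eq_zero_iff_eq_neg] at h)), if_neg ha, mul_zero]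
  simp_rw [h3]
  rw [Finset.sum_ite_eq' Finset.univ (-1 : ZMod N)
    (fun a => χ a * (Fintype.card (ZMod N) : F)), if_pos (Finset.mem_univ _), ZMod.card]
  ring


lemma gauss_key {F : Type*} [Field F] {N : ℕ} [NeZero N] (χ : DirichletCharacter F N)
    (hχ : χ.IsPrimitive) (hχinv : (χ⁻¹).IsPrimitive)
    (e : AddChar (ZMod N) F) (he : e.IsPrimitive) (a : ZMod N) :
    gaussSum χ e * ∑ u : (ZMod N)ˣ, χ⁻¹ (-(u : ZMod N)) * e ((u : ZMod N) * a)
      = (N : F) * χ a := by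
  have h1 : ∑ u : (ZMod N)ˣ, χ⁻¹ (-(u : ZMod N)) * e ((u : ZMod N) * a)
      = gaussSum χ⁻¹ (e.mulShift (-a)) := by
    rw [sum_units_eq' (f := fun t : ZMod N => χ⁻¹ (-t) * e (t * a))
      (fun t ht => by
        show χ⁻¹ (-t) * e (t * a) = 0
        rw [MulChar.map_nonunit _ (fun h => ht (by simpa using h.neg)), zero_mul])]
    have h : gaussSum χ⁻¹ (e.mulShift (-a))
        = ∑ s : ZMod N, χ⁻¹ s * e (-a * s) := by
      exact Finset.sum_congr rfl fun s _ => by rw [AddChar.mulShift_apply]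
    rw [h]
    refine Fintype.sum_equiv (Equiv.neg (ZMod N)) _ _ fun t => ?_
    simp only [Equiv.neg_apply]
    rw [neg_mul_neg, mul_comm a t]
  rw [h1, gaussSum_mulShift_of_isPrimitive e hχinv (-a), inv_inv, ← mul_assoc,
    mul_comm (gaussSum χ e) (χ (-a)), mul_assoc, gauss_self χ hχ e he]
  have h4 : χ (-a) * ((N : F) * χ (-1)) = (N : F) * (χ (-1) * χ (-1)) * χ a := by
    have h5 : χ (-a) = χ (-1) * χ a := by rw [← map_mul, neg_one_mul]
    rw [h5]; ring
  rw [h4, ← map_mul, neg_one_mul, neg_neg, map_one, mul_one]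

open Finset in
/-- Let `φ` be a primitive Dirichlet character modulo `pⁿ` with values in `W`
(extended by zero to `ℤ/pⁿℤ` and to `ℤ_p` via reduction), `ζ` a fixed primitive `pⁿ`-th root of
unity in `W`, and `G(φ) = Σ_{a ∈ (ℤ/pⁿℤ)ˣ} φ(a) ζ^a` the Gauss sum. Then for every `W`-valued
`p`-adic measure `μ` on `ℤ_p` and every `m ≥ 0`, in `K`:
`∫ φ(x)·x^m dμ = p^{-n}·G(φ)·Σ_{u ∈ (ℤ/pⁿℤ)ˣ} φ(−u)⁻¹·∫ x^m·(ζ^u)^x dμ`. -/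
theorem integral_dirichlet_twist (n : ℕ) (hn : 1 ≤ n)
    (ζ : K) (hζ : IsPrimitiveRoot ζ (p ^ n)) (hζW : ‖ζ‖ ≤ 1)
    (φ : DirichletCharacter (IntegerRing K) (p ^ n))
    (hprim : ¬ φ.FactorsThrough (p ^ (n - 1)))
    (Φc : C(ℤ_[p], IntegerRing K))
    (hΦc : ∀ x : ℤ_[p], Φc x = φ (PadicInt.toZModPow n x))
    (E : (ZMod (p ^ n))ˣ → C(ℤ_[p], IntegerRing K))
    (hE : ∀ (u : (ZMod (p ^ n))ˣ) (x : ℤ_[p]),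
      HasSum (fun k => ((binomC p K k x : K)) * (ζ ^ ((u : ZMod (p ^ n)).val) - 1) ^ k)
        ((E u x : K)))
    (μ : PadicMeasure p K) (m : ℕ) :
    ((μ (Φc * monomC p K m) : K)) =
      ((p : K) ^ n)⁻¹ *
        (∑ a : (ZMod (p ^ n))ˣ, ((φ (a : ZMod (p ^ n)) : K)) * ζ ^ ((a : ZMod (p ^ n)).val)) *
        ∑ u : (ZMod (p ^ n))ˣ, ((φ (-(u : ZMod (p ^ n))) : K))⁻¹ *
          ((μ (monomC p K m * E u) : K)) := by
  classical
  haveI hNZ : NeZero (p ^ n) := ⟨pow_ne_zero n (Fact.out : p.Prime).ne_zero⟩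
  haveI : CharZero K := charZero_of_injective_algebraMap (algebraMap ℚ_[p] K).injective
  have hpK : ((p : K) ^ n) ≠ 0 :=
    pow_ne_zero _ (Nat.cast_ne_zero.mpr (Fact.out : p.Prime).ne_zero)
  have hζpow : ζ ^ (p ^ n) = 1 := hζ.pow_eq_one
  set χ : DirichletCharacter K (p ^ n) := φ.ringHomComp (IntegerRing K).subtype with hχdef
  set e : AddChar (ZMod (p ^ n)) K := AddChar.zmodChar (p ^ n) hζpow with hedef
  have he : e.IsPrimitive := AddChar.zmodChar_primitive_of_primitive_root _ hζ
  have hdvd' : p ^ (n - 1) ∣ p ^ n := pow_dvd_pow p (Nat.sub_le n 1)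
  have hprimχ : ¬ DirichletCharacter.FactorsThrough χ (p ^ (n - 1)) :=
    fun h => hprim ((ringHomComp_factorsThrough_iff K φ hdvd').mp h)
  have hχprim : χ.IsPrimitive := isPrimitive_of_not_factorsThrough p n hn χ hprimχ
  have hχinvprim : (χ⁻¹).IsPrimitive :=
    isPrimitive_of_not_factorsThrough p n hn χ⁻¹
      (fun h => hprimχ ((inv_factorsThrough_iff χ hdvd').mp h))
  -- `W`-level data
  set zW : IntegerRing K := ⟨ζ, hζW⟩ with hzWdef
  set Gw : IntegerRing K :=
    ∑ a : (ZMod (p ^ n))ˣ, φ (a : ZMod (p ^ n)) * zW ^ ((a : ZMod (p ^ n)).val) with hGwdef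
  set cw : (ZMod (p ^ n))ˣ → IntegerRing K :=
    fun u => φ⁻¹ (-(u : ZMod (p ^ n))) with hcwdef
  have happly : ∀ a : ZMod (p ^ n), χ a = ((φ a : K)) := fun a => rfl
  have hGwK : ((Gw : K)) = gaussSum χ e := by
    rw [hGwdef, gaussSum, ← sum_units_eq' (f := fun t : ZMod (p ^ n) => χ t * e t)
        (fun t ht => by show χ t * e t = 0; rw [MulChar.map_nonunit _ ht, zero_mul])]
    push_cast
    refine Finset.sum_congr rfl fun u _ => ?_
    rw [happly, hedef, AddChar.zmodChar_apply]
  have hcwK : ∀ u : (ZMod (p ^ n))ˣ, ((cw u : K)) = χ⁻¹ (-(u : ZMod (p ^ n))) := by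
    intro u
    rw [hcwdef, hχdef, MulChar.ringHomComp_inv]
    rfl
  have hinv : ∀ u : (ZMod (p ^ n))ˣ,
      ((φ (-(u : ZMod (p ^ n))) : K))⁻¹ = ((cw u : K)) := by
    intro u
    rw [hcwK u, MulChar.inv_apply_eq_inv']
    rfl
  have hEval : ∀ (u : (ZMod (p ^ n))ˣ) (x : ℤ_[p]),
      ((E u x : K)) = e ((u : ZMod (p ^ n)) * PadicInt.toZModPow n x) :=
    fun u x => E_spec p K n hζpow u (E u) (hE u) x
  have hΦcK : ∀ x : ℤ_[p], ((Φc x : K)) = χ (PadicInt.toZModPow n x) := by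
    intro x; rw [hΦc x]; rfl
  have hkey : ∀ a : ZMod (p ^ n),
      gaussSum χ e * ∑ u : (ZMod (p ^ n))ˣ,
        χ⁻¹ (-(u : ZMod (p ^ n))) * e ((u : ZMod (p ^ n)) * a) = (p : K) ^ n * χ a := by
    intro a
    rw [gauss_key χ hχprim hχinvprim e he a]
    norm_num
  -- the function-level identity
  have hfun : ((p : IntegerRing K) ^ n) • (Φc * monomC p K m)
      = ∑ u : (ZMod (p ^ n))ˣ, (Gw * cw u) • (monomC p K m * E u) := by
    ext x
    have hR : (∑ u : (ZMod (p ^ n))ˣ, (Gw * cw u) • (monomC p K m * E u)) x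
        = ∑ u : (ZMod (p ^ n))ˣ, (Gw * cw u) * (monomC p K m x * E u x) := by
      simp [ContinuousMap.coe_sum, Finset.sum_apply, smul_eq_mul]
    have hL : (((p : IntegerRing K) ^ n) • (Φc * monomC p K m)) x
        = ((p : IntegerRing K) ^ n) * (Φc x * monomC p K m x) := rfl
    rw [hL, hR]
    push_cast
    rw [hΦcK x]
    have hRK : ∑ u : (ZMod (p ^ n))ˣ, ((Gw : K) * ((cw u : K))) *
          (((monomC p K m x : K)) * ((E u x : K)))
        = ((monomC p K m x : K)) * (gaussSum χ e * ∑ u : (ZMod (p ^ n))ˣ,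
            χ⁻¹ (-(u : ZMod (p ^ n))) * e ((u : ZMod (p ^ n)) * PadicInt.toZModPow n x)) := by
      rw [Finset.mul_sum, Finset.mul_sum]
      refine Finset.sum_congr rfl fun u _ => ?_
      rw [hGwK, hcwK u, hEval u x]
      ring
    rw [hRK, hkey (PadicInt.toZModPow n x)]
    ring
  -- apply the measure
  have hμ := congrArg (fun f => ((μ f : K))) hfun
  simp only [map_smul, map_sum, smul_eq_mul] at hμ
  push_cast at hμ
  -- hμ : (p:K)^n * ↑(μ (Φc * monomC p K m)) = ∑ u, ↑Gw * ↑(cw u) * ↑(μ (monomC p K m * E u))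
  have hGstmt : (∑ a : (ZMod (p ^ n))ˣ, ((φ (a : ZMod (p ^ n)) : K))
      * ζ ^ ((a : ZMod (p ^ n)).val)) = ((Gw : K)) := by
    rw [hGwdef]
    push_cast
    rfl
  rw [hGstmt]
  have hsum2 : ∑ u : (ZMod (p ^ n))ˣ, ((φ (-(u : ZMod (p ^ n))) : K))⁻¹ *
        ((μ (monomC p K m * E u) : K))
      = ∑ u : (ZMod (p ^ n))ˣ, ((cw u : K)) * ((μ (monomC p K m * E u) : K)) :=
    Finset.sum_congr rfl fun u _ => by rw [hinv u]
  rw [hsum2]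
  have hfinal : (Gw : K) * ∑ u : (ZMod (p ^ n))ˣ, ((cw u : K)) *
        ((μ (monomC p K m * E u) : K))
      = (p : K) ^ n * ((μ (Φc * monomC p K m) : K)) := by
    rw [Finset.mul_sum]
    rw [hμ]
    refine Finset.sum_congr rfl fun u _ => ?_
    ring
  rw [mul_assoc, hfinal, inv_mul_cancel_left₀ hpK]
end

section
/- There exist exactly two group homomorphisms θ: ℤ_p^× → ℤ_p[[T]]^× satisfying θ(z)² = [z] for all z ∈ ℤ_p^× (the 'critical characters'), and the two such homomorphisms differ by multiplication by the quadratic character z ↦ ω(z)^{(p−1)/2}: if θ₁ and θ₂ are the two solutions, then θ₂(z) = ω(z)^{(p−1)/2}·θ₁(z) for all z ∈ ℤ_p^×. -/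
open Finset PowerSeries
open scoped Nat

variable (p : ℕ) [Fact p.Prime]

/-- `γ^s := Σ_n C(s,n)·pⁿ ∈ 1 + pℤ_p`, for `γ = 1 + p` and `s ∈ ℤ_p`. -/
noncomputable def gammaZpow (s : ℤ_[p]) : ℤ_[p] :=
  ∑' n : ℕ, Ring.choose s n * (p : ℤ_[p]) ^ n

namespace CritCharAux

variable {p : ℕ} [hp : Fact p.Prime]

lemma norm_term_le (s x : ℤ_[p]) (n : ℕ) : ‖Ring.choose s n * x ^ n‖ ≤ ‖x‖ ^ n := by
  rw [norm_mul, norm_pow]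
  exact mul_le_of_le_one_left (by positivity) (PadicInt.norm_le_one _)

lemma summable_norm (s x : ℤ_[p]) (hx : ‖x‖ < 1) :
    Summable fun n => ‖Ring.choose s n * x ^ n‖ :=
  Summable.of_nonneg_of_le (fun _ => norm_nonneg _) (norm_term_le s x)
    (summable_geometric_of_lt_one (norm_nonneg x) hx)

lemma summable' (s x : ℤ_[p]) (hx : ‖x‖ < 1) :
    Summable fun n => Ring.choose s n * x ^ n :=
  (summable_norm s x hx).of_norm

/-- binomial series -/
noncomputable def F (s x : ℤ_[p]) : ℤ_[p] := ∑' n : ℕ, Ring.choose s n * x ^ n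

lemma gammaZpow_eq (s : ℤ_[p]) : gammaZpow p s = F s p := rfl

lemma norm_p_lt_one : ‖((p : ℕ) : ℤ_[p])‖ < 1 := by
  rw [PadicInt.norm_p]
  rw [inv_lt_one_iff₀]
  right
  exact_mod_cast hp.out.one_lt

lemma F_add (a b x : ℤ_[p]) (hx : ‖x‖ < 1) : F (a + b) x = F a x * F b x := by
  rw [F, F, F,
    tsum_mul_tsum_eq_tsum_sum_antidiagonal_of_summable_norm
      (summable_norm a x hx) (summable_norm b x hx)]
  refine tsum_congr fun n => ?_
  rw [Ring.add_choose_eq n (Commute.all a b), sum_mul]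
  refine sum_congr rfl fun ij hij => ?_
  have h : ij.1 + ij.2 = n := mem_antidiagonal.mp hij
  rw [← h, pow_add]; ring

lemma F_one (x : ℤ_[p]) (hx : ‖x‖ < 1) : F 1 x = 1 + x := by
  rw [F]
  have h0 : ∀ n : ℕ, n ∉ Finset.range 2 → Ring.choose (1 : ℤ_[p]) n * x ^ n = 0 := by
    intro n hn
    rw [Finset.mem_range, not_lt] at hn
    have : ((1 : ℕ) : ℤ_[p]) = (1 : ℤ_[p]) := by norm_num
    rw [← this, Ring.choose_natCast, Nat.choose_eq_zero_of_lt (by omega), Nat.cast_zero, zero_mul]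
  rw [tsum_eq_sum h0]
  have : ((1 : ℕ) : ℤ_[p]) = (1 : ℤ_[p]) := by norm_num
  rw [Finset.sum_range_succ, Finset.sum_range_one, ← this, Ring.choose_natCast,
    Ring.choose_natCast]
  simp

lemma F_split (s x : ℤ_[p]) (hx : ‖x‖ < 1) :
    F s x = 1 + s * x + ∑' n : ℕ, Ring.choose s (n + 2) * x ^ (n + 2) := by
  have hsum2 : Summable (fun n : ℕ => Ring.choose s (n + 1) * x ^ (n + 1)) :=
    (summable' s x hx).comp_injective (add_left_injective 1)
  rw [F, Summable.tsum_eq_zero_add (summable' s x hx), Summable.tsum_eq_zero_add hsum2,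
    Ring.choose_zero_right, Ring.choose_one_right]
  simp only [pow_zero, mul_one, zero_add, pow_one, add_assoc, one_add_one_eq_two]

lemma F_sub_one (s x : ℤ_[p]) (hx : ‖x‖ < 1) : ‖F s x - 1‖ ≤ ‖x‖ := by
  rw [F, Summable.tsum_eq_zero_add (summable' s x hx)]
  rw [Ring.choose_zero_right, pow_zero, mul_one, add_sub_cancel_left]
  refine IsUltrametricDist.norm_tsum_le_of_forall_le_of_nonneg (norm_nonneg x) fun n => ?_
  refine (norm_term_le s x (n + 1)).trans ?_
  exact pow_le_of_le_one (norm_nonneg x) ((PadicInt.norm_le_one x)) (by omega)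

lemma padicValNat_factorial_le (hodd : p ≠ 2) {m : ℕ} (hm : 2 ≤ m) :
    padicValNat p (m !) ≤ m - 2 := by
  have hleg := sub_one_mul_padicValNat_factorial (p := p) m
  have hp3 : 3 ≤ p := by
    have := hp.out.two_le
    omega
  have hs : 1 ≤ (p.digits m).sum := by
    have hm0 : m ≠ 0 := by omega
    have hne : p.digits m ≠ [] := Nat.digits_ne_nil_iff_ne_zero.mpr hm0
    have hmem : (p.digits m).getLast hne ∈ p.digits m := List.getLast_mem hne
    have hlast : (p.digits m).getLast hne ≠ 0 := by
      have := Nat.getLast_digit_ne_zero p hm0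
      simpa using this
    have hle := List.single_le_sum (fun x (_ : x ∈ p.digits m) => Nat.zero_le x) _ hmem
    omega
  have h2v : 2 * padicValNat p (m !) ≤ m - (p.digits m).sum := by
    rw [← hleg]
    exact Nat.mul_le_mul_right _ (by omega)
  omega

lemma desc_smeval_eq (m : ℕ) (c : ℤ_[p]) :
    (descPochhammer ℤ m).smeval c = (descPochhammer ℤ_[p] m).eval c := by
  rw [← Polynomial.aeval_eq_smeval, Polynomial.aeval_def, ← Polynomial.eval_map,
    descPochhammer_map]

lemma norm_descPochhammer_le (m : ℕ) (hm : 1 ≤ m) (c : ℤ_[p]) :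
    ‖(descPochhammer ℤ_[p] m).eval c‖ ≤ ‖c‖ := by
  induction m with
  | zero => omega
  | succ n ih =>
    rcases Nat.eq_or_lt_of_le hm with h | h
    · have hn : n = 0 := by omega
      subst hn
      simp [descPochhammer_one]
    · have hn : 1 ≤ n := by omega
      rw [descPochhammer_succ_eval, norm_mul]
      calc ‖Polynomial.eval c (descPochhammer ℤ_[p] n)‖ * ‖c - (n : ℤ_[p])‖
          ≤ ‖c‖ * 1 := mul_le_mul (ih hn) (PadicInt.norm_le_one _) (norm_nonneg _) (norm_nonneg _)
        _ = ‖c‖ := mul_one _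

lemma norm_choose_mul_factorial_le (m : ℕ) (hm : 1 ≤ m) (c : ℤ_[p]) :
    ‖Ring.choose c m‖ * ‖((m ! : ℕ) : ℤ_[p])‖ ≤ ‖c‖ := by
  have h := Ring.descPochhammer_eq_factorial_smul_choose (R := ℤ_[p]) c m
  rw [desc_smeval_eq] at h
  have := norm_descPochhammer_le m hm c
  rw [h, nsmul_eq_mul, norm_mul] at this
  linarith [this]

lemma norm_factorial (m : ℕ) :
    ‖((m ! : ℕ) : ℤ_[p])‖ = (p : ℝ) ^ (-(padicValNat p (m !) : ℤ)) := by
  have hvf : (m !).factorization p = padicValNat p (m !) :=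
    Nat.factorization_def _ hp.out
  set v := padicValNat p (m !) with hv
  have hfac : (m ! : ℕ) = p ^ v * (m ! / p ^ v) := by
    rw [← hvf]
    exact (Nat.ordProj_mul_ordCompl_eq_self (m !) p).symm
  have hnd : ¬ (p ∣ m ! / p ^ v) := by
    rw [← hvf]
    exact Nat.not_dvd_ordCompl hp.out m.factorial_ne_zero
  have hq : ‖(((m ! / p ^ v : ℕ)) : ℤ_[p])‖ = 1 := by
    refine le_antisymm (PadicInt.norm_le_one _) ?_
    by_contra hlt
    push_neg at hlt
    rw [show ((m ! / p ^ v : ℕ) : ℤ_[p]) = (((m ! / p ^ v : ℕ) : ℤ) : ℤ_[p]) from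
      (Int.cast_natCast _).symm, PadicInt.norm_int_lt_one_iff_dvd] at hlt
    exact hnd (by exact_mod_cast hlt)
  calc ‖((m ! : ℕ) : ℤ_[p])‖ = ‖((p : ℤ_[p]) ^ v) * ((m ! / p ^ v : ℕ) : ℤ_[p])‖ := by
        congr 1
        rw [← Nat.cast_pow, ← Nat.cast_mul, ← hfac]
    _ = ‖(p : ℤ_[p]) ^ v‖ * 1 := by rw [norm_mul, hq]
    _ = (p : ℝ) ^ (-(v : ℤ)) := by rw [mul_one, PadicInt.norm_p_pow]

lemma norm_choose_mul_pow_le (hodd : p ≠ 2) (c : ℤ_[p]) (m : ℕ) (hm : 2 ≤ m) :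
    ‖Ring.choose c m * (p : ℤ_[p]) ^ m‖ ≤ ‖c‖ * ((p : ℝ) ^ (-2 : ℤ)) := by
  have hppos : (0 : ℝ) < (p : ℝ) := by exact_mod_cast hp.out.pos
  have h1 := norm_choose_mul_factorial_le m (by omega) c
  rw [norm_factorial] at h1
  have hvle := padicValNat_factorial_le hodd hm
  set v := padicValNat p (m !)
  have hchoose : ‖Ring.choose c m‖ ≤ ‖c‖ * (p : ℝ) ^ (v : ℤ) := by
    have hpow : (0 : ℝ) < (p : ℝ) ^ (-(v : ℤ)) := zpow_pos hppos _
    rw [← le_div_iff₀ hpow] at h1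
    rwa [div_eq_mul_inv, ← zpow_neg, neg_neg] at h1
  rw [norm_mul, PadicInt.norm_p_pow]
  calc ‖Ring.choose c m‖ * (p : ℝ) ^ (-(m : ℤ))
      ≤ (‖c‖ * (p : ℝ) ^ (v : ℤ)) * (p : ℝ) ^ (-(m : ℤ)) := by
        apply mul_le_mul_of_nonneg_right hchoose (zpow_nonneg hppos.le _)
    _ = ‖c‖ * (p : ℝ) ^ ((v : ℤ) - (m : ℤ)) := by
        rw [mul_assoc, ← zpow_add₀ hppos.ne']
        ring_nf
    _ ≤ ‖c‖ * (p : ℝ) ^ (-2 : ℤ) := by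
        apply mul_le_mul_of_nonneg_left _ (norm_nonneg c)
        apply zpow_le_zpow_right₀ (by exact_mod_cast hp.out.one_lt.le)
        omega

lemma F_p_eq_one (hodd : p ≠ 2) (c : ℤ_[p]) (h : F c ((p : ℕ) : ℤ_[p]) = 1) : c = 0 := by
  have hppos : (0 : ℝ) < (p : ℝ) := by exact_mod_cast hp.out.pos
  have hx := norm_p_lt_one (p := p)
  have hsplit := F_split c _ hx
  rw [h] at hsplit
  have hR : c * (p : ℤ_[p]) = - ∑' n : ℕ, Ring.choose c (n + 2) * (p : ℤ_[p]) ^ (n + 2) := by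
    linear_combination -hsplit
  have hnorm : ‖c * (p : ℤ_[p])‖ ≤ ‖c‖ * ((p : ℝ) ^ (-2 : ℤ)) := by
    rw [hR, norm_neg]
    exact IsUltrametricDist.norm_tsum_le_of_forall_le_of_nonneg
      (by positivity) fun n => norm_choose_mul_pow_le hodd c (n + 2) (by omega)
  rw [norm_mul, PadicInt.norm_p] at hnorm
  by_contra hc
  have hcpos : 0 < ‖c‖ := norm_pos_iff.mpr hc
  have hlt : (p : ℝ) ^ (-2 : ℤ) < (p : ℝ)⁻¹ := by
    rw [← zpow_neg_one]
    exact zpow_lt_zpow_right₀ (by exact_mod_cast hp.out.one_lt) (by omega)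
  nlinarith

end CritCharAux


section Part2

variable {p : ℕ} [hp : Fact p.Prime]

open CritCharAux

lemma toZMod_eq_zero_iff {x : ℤ_[p]} : PadicInt.toZMod x = 0 ↔ (p : ℤ_[p]) ∣ x := by
  rw [← RingHom.mem_ker, PadicInt.ker_toZMod, PadicInt.maximalIdeal_eq_span_p,
    Ideal.mem_span_singleton]

lemma isUnit_iff_toZMod_ne_zero {x : ℤ_[p]} : IsUnit x ↔ PadicInt.toZMod x ≠ 0 := by
  rw [PadicInt.isUnit_iff]
  constructor
  · intro h1 h0
    rw [toZMod_eq_zero_iff, ← PadicInt.norm_lt_one_iff_dvd] at h0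
    rw [h1] at h0
    exact lt_irrefl _ h0
  · intro h
    refine le_antisymm (PadicInt.norm_le_one x) ?_
    by_contra hlt
    push_neg at hlt
    exact h (toZMod_eq_zero_iff.mpr ((PadicInt.norm_lt_one_iff_dvd x).mp hlt))

lemma exists_sq_of_norm_sub_one_lt {u : ℤ_[p]} (hu : ‖u - 1‖ < 1) (half : ℤ_[p])
    (hhalf : half + half = 1) : ∃ t : ℤ_[p], t * t = u := by
  refine ⟨F half (u - 1), ?_⟩
  rw [← F_add _ _ _ hu, hhalf, F_one _ hu]
  ring

lemma isUnit_of_pow_eq_one' {x : ℤ_[p]} (h : x ^ (p - 1) = 1) : IsUnit x := by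
  have h2 : 2 ≤ p := hp.out.two_le
  refine IsUnit.of_mul_eq_one (x ^ (p - 2)) ?_
  rw [← pow_succ', show p - 2 + 1 = p - 1 from by omega, h]

lemma one_of_pow_eq_one_of_toZMod_one {u : ℤ_[p]} (hu : u ^ (p - 1) = 1)
    (h1 : PadicInt.toZMod u = 1) : u = 1 := by
  have h2 : 2 ≤ p := hp.out.two_le
  have hgeom : (∑ i ∈ Finset.range (p - 1), u ^ i) * (u - 1) = u ^ (p - 1) - 1 :=
    geom_sum_mul u (p - 1)
  rw [hu, sub_self] at hgeom
  have hunit : IsUnit (∑ i ∈ Finset.range (p - 1), u ^ i) := by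
    rw [isUnit_iff_toZMod_ne_zero]
    have hsum : PadicInt.toZMod (∑ i ∈ Finset.range (p - 1), u ^ i) = ((p - 1 : ℕ) : ZMod p) := by
      rw [map_sum]
      simp [map_pow, h1]
    rw [hsum]
    intro h0
    rw [ZMod.natCast_eq_zero_iff] at h0
    have := Nat.le_of_dvd (by omega) h0
    omega
  have h0 : u - 1 = 0 := (hunit.mul_right_eq_zero).mp hgeom
  linear_combination h0

lemma roots_eq {x y : ℤ_[p]} (hx : x ^ (p - 1) = 1) (hy : y ^ (p - 1) = 1)
    (hxy : PadicInt.toZMod x = PadicInt.toZMod y) : x = y := by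
  have h2 : 2 ≤ p := hp.out.two_le
  set u := x * y ^ (p - 2) with hu
  have hupow : u ^ (p - 1) = 1 := by
    rw [hu, mul_pow, hx, one_mul, ← pow_mul, mul_comm, pow_mul, hy, one_pow]
  have hut : PadicInt.toZMod u = 1 := by
    rw [hu, map_mul, map_pow, hxy, ← map_pow, ← map_mul, ← pow_succ',
      show p - 2 + 1 = p - 1 from by omega, hy, map_one]
  have hone := one_of_pow_eq_one_of_toZMod_one hupow hut
  calc x = x * (y ^ (p - 2) * y) := by
        rw [← pow_succ, show p - 2 + 1 = p - 1 from by omega, hy, mul_one]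
    _ = u * y := by rw [hu]; ring
    _ = y := by rw [hone, one_mul]

lemma gamma_add (a b : ℤ_[p]) : gammaZpow p (a + b) = gammaZpow p a * gammaZpow p b := by
  rw [gammaZpow_eq, gammaZpow_eq, gammaZpow_eq]
  exact F_add a b _ norm_p_lt_one

lemma F_zero (x : ℤ_[p]) : F 0 x = 1 := by
  rw [F]
  rw [tsum_eq_single 0 (fun n hn => by
    rw [Ring.choose_zero_ite, if_neg hn, zero_mul])]
  rw [Ring.choose_zero_ite, if_pos rfl, pow_zero, mul_one]

lemma gamma_zero : gammaZpow p 0 = 1 := by rw [gammaZpow_eq, F_zero]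

lemma gamma_isUnit (s : ℤ_[p]) : IsUnit (gammaZpow p s) :=
  IsUnit.of_mul_eq_one _ (by rw [← gamma_add, add_neg_cancel, gamma_zero])

lemma gamma_inj (hodd : p ≠ 2) {a b : ℤ_[p]} (h : gammaZpow p a = gammaZpow p b) : a = b := by
  have h1 : gammaZpow p a * gammaZpow p (b - a) = gammaZpow p a * 1 := by
    rw [mul_one, ← gamma_add, show a + (b - a) = b from by ring]
    exact h.symm
  have h2 := (gamma_isUnit a).mul_left_cancel h1
  have h3 : b - a = 0 := F_p_eq_one hodd _ h2
  exact (eq_of_sub_eq_zero h3).symm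

lemma gamma_toZMod (s : ℤ_[p]) : PadicInt.toZMod (gammaZpow p s) = 1 := by
  have h : ‖gammaZpow p s - 1‖ < 1 := by
    refine lt_of_le_of_lt ?_ (norm_p_lt_one (p := p))
    rw [gammaZpow_eq]
    exact F_sub_one s _ norm_p_lt_one
  have h0 : PadicInt.toZMod (gammaZpow p s - 1) = 0 :=
    toZMod_eq_zero_iff.mpr ((PadicInt.norm_lt_one_iff_dvd _).mp h)
  rw [map_sub, map_one, sub_eq_zero] at h0
  exact h0

noncomputable def Emk (s : ℤ_[p]) : PowerSeries ℤ_[p] :=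
  PowerSeries.mk fun n => Ring.choose s n

lemma Emk_mul (a b : ℤ_[p]) : Emk a * Emk b = Emk (a + b) := by
  ext n
  simp only [Emk, PowerSeries.coeff_mul, PowerSeries.coeff_mk]
  rw [Ring.add_choose_eq n (Commute.all a b)]

lemma Emk_zero : Emk (0 : ℤ_[p]) = 1 := by
  ext n
  rw [Emk, PowerSeries.coeff_mk, Ring.choose_zero_ite, PowerSeries.coeff_one]

noncomputable def Eunit (s : ℤ_[p]) : (PowerSeries ℤ_[p])ˣ :=
  ⟨Emk s, Emk (-s), by rw [Emk_mul, add_neg_cancel, Emk_zero],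
    by rw [Emk_mul, neg_add_cancel, Emk_zero]⟩

@[simp] lemma Eunit_val (s : ℤ_[p]) : ((Eunit s : (PowerSeries ℤ_[p])ˣ) : PowerSeries ℤ_[p]) = Emk s := rfl

end Part2

open CritCharAux in
/-- Let `p` be an odd prime.  Given the Teichmüller character `ω`, the
Iwasawa logarithm `ℓ` (so `z = ω(z)·γ^{ℓ(z)}`), and the group-like elements
`[z] = (1+T)^{ℓ(z)} = Σ_n C(ℓ(z),n) Tⁿ ∈ ℤ_p[[T]]ˣ`, there exist exactly two group
homomorphisms `θ : ℤ_pˣ → ℤ_p[[T]]ˣ` with `θ(z)² = [z]` for all `z`, and the two solutions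
differ by multiplication by the quadratic character `z ↦ ω(z)^{(p−1)/2}`. -/
theorem critical_characters (hodd : p ≠ 2)
    (ω : (ℤ_[p])ˣ → ℤ_[p]) (ℓ : (ℤ_[p])ˣ → ℤ_[p])
    (hω : ∀ z : (ℤ_[p])ˣ, (ω z) ^ (p - 1) = 1 ∧
      PadicInt.toZMod (ω z) = PadicInt.toZMod (z : ℤ_[p]))
    (hℓ : ∀ z : (ℤ_[p])ˣ, (z : ℤ_[p]) = ω z * gammaZpow p (ℓ z))
    (B : (ℤ_[p])ˣ → (PowerSeries ℤ_[p])ˣ)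
    (hB : ∀ z : (ℤ_[p])ˣ,
      (B z : PowerSeries ℤ_[p]) = PowerSeries.mk fun n => Ring.choose (ℓ z) n) :
    ∃ θ₁ θ₂ : (ℤ_[p])ˣ →* (PowerSeries ℤ_[p])ˣ, θ₁ ≠ θ₂ ∧
      (∀ θ : (ℤ_[p])ˣ →* (PowerSeries ℤ_[p])ˣ,
        (∀ z, (θ z) ^ 2 = B z) ↔ (θ = θ₁ ∨ θ = θ₂)) ∧
      ∀ z : (ℤ_[p])ˣ, (θ₂ z : PowerSeries ℤ_[p]) =
        PowerSeries.C ((ω z) ^ ((p - 1) / 2)) * (θ₁ z : PowerSeries ℤ_[p]) := by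
  classical
  have hp2 : 2 ≤ p := ‹Fact p.Prime›.out.two_le
  have hp3 : 3 ≤ p := by omega
  -- half
  have h2unit : IsUnit (2 : ℤ_[p]) := by
    rw [isUnit_iff_toZMod_ne_zero]
    have h2 : ((2 : ℤ_[p])) = ((2 : ℕ) : ℤ_[p]) := by norm_num
    rw [h2, map_natCast]
    intro h0
    rw [ZMod.natCast_eq_zero_iff] at h0
    have := Nat.le_of_dvd (by omega) h0
    omega
  obtain ⟨two, htwo⟩ := h2unit
  set half : ℤ_[p] := ((two⁻¹ : ℤ_[p]ˣ) : ℤ_[p]) with hhalfdef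
  have htwohalf : (2 : ℤ_[p]) * half = 1 := by
    rw [← htwo, hhalfdef]
    exact_mod_cast two.mul_inv
  have hhalf2 : half + half = 1 := by
    calc half + half = 2 * half := (two_mul half).symm
      _ = 1 := htwohalf
  -- ω and ℓ basics
  have hωu : ∀ z, IsUnit (ω z) := fun z => isUnit_of_pow_eq_one' (hω z).1
  have hω_mul : ∀ z w, ω (z * w) = ω z * ω w := by
    intro z w
    refine roots_eq (hω (z * w)).1 ?_ ?_
    · rw [mul_pow, (hω z).1, (hω w).1, one_mul]
    · rw [(hω (z * w)).2, map_mul, Units.val_mul, map_mul, (hω z).2, (hω w).2]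
  have hℓ_add : ∀ z w, ℓ (z * w) = ℓ z + ℓ w := by
    intro z w
    have h1 := hℓ (z * w)
    have h2 := hℓ z
    have h3 := hℓ w
    have hkey : ω (z * w) * gammaZpow p (ℓ (z * w)) = ω (z * w) * gammaZpow p (ℓ z + ℓ w) := by
      rw [← h1, gamma_add, hω_mul, Units.val_mul, h2, h3]
      ring
    exact gamma_inj hodd ((hωu (z * w)).mul_left_cancel hkey)
  -- ε facts
  have hpodd : (p - 1) % 2 = 0 := by
    have : Odd p := ‹Fact p.Prime›.out.odd_of_ne_two hodd
    rcases this with ⟨k, hk⟩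
    omega
  have hεsq : ∀ z, (ω z) ^ ((p - 1) / 2) * (ω z) ^ ((p - 1) / 2) = 1 := by
    intro z
    rw [← pow_add, show (p - 1) / 2 + (p - 1) / 2 = p - 1 from by omega, (hω z).1]
  have hεmul : ∀ z w, (ω (z * w)) ^ ((p - 1) / 2)
      = (ω z) ^ ((p - 1) / 2) * (ω w) ^ ((p - 1) / 2) := by
    intro z w
    rw [hω_mul, mul_pow]
  have hεpm : ∀ z, (ω z) ^ ((p - 1) / 2) = 1 ∨ (ω z) ^ ((p - 1) / 2) = -1 := by
    intro z
    have h0 : ((ω z) ^ ((p - 1) / 2) - 1) * ((ω z) ^ ((p - 1) / 2) + 1) = 0 := by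
      linear_combination hεsq z
    rcases mul_eq_zero.mp h0 with h | h
    · exact Or.inl (sub_eq_zero.mp h)
    · exact Or.inr (eq_neg_of_add_eq_zero_left h)
  have hεtoZMod : ∀ z, PadicInt.toZMod ((ω z) ^ ((p - 1) / 2))
      = (PadicInt.toZMod (z : ℤ_[p])) ^ ((p - 1) / 2) := by
    intro z
    rw [map_pow, (hω z).2]
  have hzne : ∀ z : (ℤ_[p])ˣ, PadicInt.toZMod (z : ℤ_[p]) ≠ 0 := fun z =>
    isUnit_iff_toZMod_ne_zero.mp z.isUnit
  have hdiv : (p - 1) / 2 = p / 2 := by omega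
  -- squares
  have hsquare : ∀ z : (ℤ_[p])ˣ, (ω z) ^ ((p - 1) / 2) = 1 → ∃ w : (ℤ_[p])ˣ, w * w = z := by
    intro z hz1
    have h1 : (PadicInt.toZMod (z : ℤ_[p])) ^ (p / 2) = 1 := by
      rw [← hdiv, ← hεtoZMod, hz1, map_one]
    obtain ⟨b, hb⟩ := (ZMod.euler_criterion p (hzne z)).mpr h1
    have hbne : b ≠ 0 := by
      intro h0
      rw [h0, mul_zero] at hb
      exact (hzne z) hb
    have hxz : PadicInt.toZMod ((b.val : ℕ) : ℤ_[p]) = b := by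
      rw [map_natCast]
      exact ZMod.natCast_rightInverse b
    obtain ⟨u, hu⟩ := isUnit_iff_toZMod_ne_zero.mpr
      (show PadicInt.toZMod ((b.val : ℕ) : ℤ_[p]) ≠ 0 by rw [hxz]; exact hbne)
    have hct : PadicInt.toZMod ((z * (u * u)⁻¹ : (ℤ_[p])ˣ) : ℤ_[p]) = 1 := by
      have h1' : ((z * (u * u)⁻¹ : (ℤ_[p])ˣ) : ℤ_[p]) * ((u * u : (ℤ_[p])ˣ) : ℤ_[p])
          = (z : ℤ_[p]) := by
        rw [← Units.val_mul, inv_mul_cancel_right]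
      have h2' := congrArg PadicInt.toZMod h1'
      rw [map_mul] at h2'
      have h3' : PadicInt.toZMod ((u * u : (ℤ_[p])ˣ) : ℤ_[p]) = PadicInt.toZMod (z : ℤ_[p]) := by
        rw [Units.val_mul, map_mul, hu, hxz, ← hb]
      rw [h3'] at h2'
      exact mul_right_cancel₀ (hzne z) (by rw [h2', one_mul])
    have hnorm : ‖((z * (u * u)⁻¹ : (ℤ_[p])ˣ) : ℤ_[p]) - 1‖ < 1 := by
      have h0 : PadicInt.toZMod (((z * (u * u)⁻¹ : (ℤ_[p])ˣ) : ℤ_[p]) - 1) = 0 := by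
        rw [map_sub, map_one, hct, sub_self]
      exact (PadicInt.norm_lt_one_iff_dvd _).mpr (toZMod_eq_zero_iff.mp h0)
    obtain ⟨t, ht⟩ := exists_sq_of_norm_sub_one_lt hnorm half hhalf2
    have htu : IsUnit t := by
      have : IsUnit (t * t) := by
        rw [ht]
        exact (z * (u * u)⁻¹).isUnit
      exact isUnit_of_mul_isUnit_left this
    obtain ⟨tu, htu'⟩ := htu
    refine ⟨tu * u, ?_⟩
    have hkey : ((tu * u) * (tu * u) : (ℤ_[p])ˣ) = (z * (u * u)⁻¹) * (u * u) := by
      apply Units.ext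
      simp only [Units.val_mul, htu']
      rw [show t * ↑u * (t * ↑u) = (t * t) * (↑u * ↑u) from by ring, ht, Units.val_mul]
    rw [hkey, inv_mul_cancel_right]
  -- nonsquare z₀
  obtain ⟨a, ha⟩ : ∃ a : ZMod p, ¬ IsSquare a :=
    FiniteField.exists_nonsquare (by rw [ZMod.ringChar_zmod_n]; exact hodd)
  have hane : a ≠ 0 := by
    intro h0
    exact ha ⟨0, by rw [h0, mul_zero]⟩
  have hx0 : PadicInt.toZMod ((a.val : ℕ) : ℤ_[p]) = a := by
    rw [map_natCast]
    exact ZMod.natCast_rightInverse a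
  obtain ⟨z₀, hz₀⟩ := isUnit_iff_toZMod_ne_zero.mpr
    (show PadicInt.toZMod ((a.val : ℕ) : ℤ_[p]) ≠ 0 by rw [hx0]; exact hane)
  have hεz₀ : (ω z₀) ^ ((p - 1) / 2) = -1 := by
    rcases hεpm z₀ with h | h
    · exfalso
      apply ha
      have h1 : (PadicInt.toZMod (z₀ : ℤ_[p])) ^ (p / 2) = 1 := by
        rw [← hdiv, ← hεtoZMod, h, map_one]
      have := (ZMod.euler_criterion p (hzne z₀)).mpr h1
      rwa [hz₀, hx0] at this
    · exact h
  -- θ₁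
  have hθ₁mul : ∀ z w : (ℤ_[p])ˣ,
      Eunit (half * ℓ (z * w)) = Eunit (half * ℓ z) * Eunit (half * ℓ w) := by
    intro z w
    apply Units.ext
    rw [Units.val_mul, Eunit_val, Eunit_val, Eunit_val, Emk_mul, hℓ_add, mul_add]
  set θ₁ : (ℤ_[p])ˣ →* (PowerSeries ℤ_[p])ˣ :=
    MonoidHom.mk' (fun z => Eunit (half * ℓ z)) hθ₁mul with hθ₁def
  -- χ (quadratic character as units of power series)
  have hεunit : ∀ z : (ℤ_[p])ˣ, ((ω z) ^ ((p - 1) / 2)) * ((ω z) ^ ((p - 1) / 2)) = 1 := hεsq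
  set χu : (ℤ_[p])ˣ → (PowerSeries ℤ_[p])ˣ := fun z =>
    ⟨PowerSeries.C ((ω z) ^ ((p - 1) / 2)),
     PowerSeries.C ((ω z) ^ ((p - 1) / 2)),
     by rw [← map_mul, hεunit z, map_one],
     by rw [← map_mul, hεunit z, map_one]⟩ with hχudef
  have hχuval : ∀ z, ((χu z : (PowerSeries ℤ_[p])ˣ) : PowerSeries ℤ_[p])
      = PowerSeries.C ((ω z) ^ ((p - 1) / 2)) := fun z => rfl
  have hχumul : ∀ z w, χu (z * w) = χu z * χu w := by
    intro z w
    apply Units.ext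
    rw [Units.val_mul, hχuval, hχuval, hχuval, hεmul, map_mul]
  have hχusq : ∀ z, χu z * χu z = 1 := by
    intro z
    apply Units.ext
    rw [Units.val_mul, hχuval, ← map_mul, hεunit z, map_one, Units.val_one]
  set θ₂ : (ℤ_[p])ˣ →* (PowerSeries ℤ_[p])ˣ :=
    MonoidHom.mk' (fun z => θ₁ z * χu z)
      (fun z w => by
        show θ₁ (z * w) * χu (z * w) = (θ₁ z * χu z) * (θ₁ w * χu w)
        rw [map_mul, hχumul]
        ac_rfl) with hθ₂def
  have hθ₂app : ∀ z, θ₂ z = θ₁ z * χu z := fun z => rfl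
  -- squares of θ₁ and θ₂
  have hθ₁val : ∀ z, ((θ₁ z : (PowerSeries ℤ_[p])ˣ) : PowerSeries ℤ_[p])
      = Emk (half * ℓ z) := fun z => rfl
  have hθ₁sq : ∀ z, (θ₁ z) ^ 2 = B z := by
    intro z
    apply Units.ext
    rw [Units.val_pow_eq_pow_val, pow_two, hθ₁val, Emk_mul, hB]
    have : half * ℓ z + half * ℓ z = ℓ z := by
      calc half * ℓ z + half * ℓ z = (half + half) * ℓ z := by ring
        _ = ℓ z := by rw [hhalf2, one_mul]
    rw [this, Emk]
  have hθ₂sq : ∀ z, (θ₂ z) ^ 2 = B z := by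
    intro z
    rw [hθ₂app, mul_pow, hθ₁sq, pow_two, hχusq, mul_one]
  -- θ₁ ≠ θ₂
  have hCne : PowerSeries.C ((ω z₀) ^ ((p - 1) / 2)) ≠ 1 := by
    intro h0
    have h1 := congrArg (PowerSeries.constantCoeff (R := ℤ_[p])) h0
    rw [PowerSeries.constantCoeff_C, map_one, hεz₀] at h1
    have : (2 : ℤ_[p]) = 0 := by linear_combination -h1
    rw [this, zero_mul] at htwohalf
    exact zero_ne_one htwohalf
  have hne : θ₁ ≠ θ₂ := by
    intro h0
    have h1 : θ₁ z₀ = θ₂ z₀ := by rw [h0]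
    rw [hθ₂app] at h1
    have h2 : χu z₀ = 1 := by
      have h2' : θ₁ z₀ * χu z₀ = θ₁ z₀ * 1 := by rw [mul_one]; exact h1.symm
      exact mul_left_cancel h2'
    have h3 := congrArg (fun u : (PowerSeries ℤ_[p])ˣ => (u : PowerSeries ℤ_[p])) h2
    simp only [hχuval, Units.val_one] at h3
    exact hCne h3
  refine ⟨θ₁, θ₂, hne, ?_, fun z => by rw [hθ₂app, Units.val_mul, hθ₁val, hχuval, mul_comm]⟩
  intro θ
  constructor
  · intro hθsq
    -- d z := θ z / θ₁ z
    set d : (ℤ_[p])ˣ → (PowerSeries ℤ_[p])ˣ := fun z => θ z * (θ₁ z)⁻¹ with hd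
    have hd2 : ∀ z, d z * d z = 1 := by
      intro z
      rw [hd]
      calc (θ z * (θ₁ z)⁻¹) * (θ z * (θ₁ z)⁻¹) = (θ z * θ z) * ((θ₁ z)⁻¹ * (θ₁ z)⁻¹) := by ac_rfl
        _ = (θ z) ^ 2 * ((θ₁ z) ^ 2)⁻¹ := by rw [← pow_two, ← mul_inv, ← pow_two]
        _ = 1 := by rw [hθsq, hθ₁sq, mul_inv_cancel]
    have hdmul : ∀ z w, d (z * w) = d z * d w := by
      intro z w
      rw [hd]
      simp only [map_mul, mul_inv]
      ac_rfl
    have hdsq1 : ∀ z : (ℤ_[p])ˣ, (ω z) ^ ((p - 1) / 2) = 1 → d z = 1 := by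
      intro z hz
      obtain ⟨w, hw⟩ := hsquare z hz
      rw [← hw, hdmul, hd2]
    have hdneg : ∀ z : (ℤ_[p])ˣ, (ω z) ^ ((p - 1) / 2) = -1 → d z = d z₀ := by
      intro z hz
      have h1 : (ω (z * z₀)) ^ ((p - 1) / 2) = 1 := by
        rw [hεmul, hz, hεz₀, neg_mul_neg, one_mul]
      have h2 : d z * d z₀ = 1 := by rw [← hdmul]; exact hdsq1 _ h1
      calc d z = d z * (d z₀ * d z₀) := by rw [hd2, mul_one]
        _ = (d z * d z₀) * d z₀ := (mul_assoc _ _ _).symm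
        _ = d z₀ := by rw [h2, one_mul]
    have hθeq : ∀ z, θ z = d z * θ₁ z := by
      intro z
      rw [hd, inv_mul_cancel_right]
    -- case on d z₀
    have hdom : ((d z₀ : (PowerSeries ℤ_[p])ˣ) : PowerSeries ℤ_[p]) = 1 ∨
        ((d z₀ : (PowerSeries ℤ_[p])ˣ) : PowerSeries ℤ_[p]) = -1 := by
      have h0 := congrArg (fun u : (PowerSeries ℤ_[p])ˣ => (u : PowerSeries ℤ_[p])) (hd2 z₀)
      simp only [Units.val_mul, Units.val_one] at h0
      have h1 : (((d z₀ : (PowerSeries ℤ_[p])ˣ) : PowerSeries ℤ_[p]) - 1) *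
          (((d z₀ : (PowerSeries ℤ_[p])ˣ) : PowerSeries ℤ_[p]) + 1) = 0 := by
        linear_combination h0
      rcases mul_eq_zero.mp h1 with h | h
      · exact Or.inl (sub_eq_zero.mp h)
      · exact Or.inr (eq_neg_of_add_eq_zero_left h)
    rcases hdom with hcase | hcase
    · left
      have hdz₀ : d z₀ = 1 := Units.ext (by rw [hcase, Units.val_one])
      apply MonoidHom.ext
      intro z
      rw [hθeq z]
      rcases hεpm z with h | h
      · rw [hdsq1 z h, one_mul]
      · rw [hdneg z h, hdz₀, one_mul]
    · right
      apply MonoidHom.ext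
      intro z
      rw [hθeq z, hθ₂app]
      rcases hεpm z with h | h
      · rw [hdsq1 z h, one_mul]
        have : χu z = 1 := Units.ext (by rw [hχuval, h, map_one, Units.val_one])
        rw [this, mul_one]
      · rw [hdneg z h]
        have : χu z = d z₀ := Units.ext (by rw [hχuval, h, hcase, map_neg, map_one])
        rw [this, mul_comm]
  · intro h
    rcases h with h | h
    · subst h; exact hθ₁sq
    · subst h; exact hθ₂sq
end

section
/- For every ℤ-lattice 𝔞 in M, the multiplier ring R(𝔞) := {α ∈ M : α·𝔞 ⊆ 𝔞} is an order of M, and 𝔞 is a projective module over R(𝔞) (i.e. 𝔞 is a proper, hence projective, fractional R(𝔞)-ideal). -/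
variable (M : Type*) [Field M] [NumberField M]

/-- The multiplier ring `R(𝔞) = {α ∈ M : α·𝔞 ⊆ 𝔞}` of a `ℤ`-submodule `𝔞 ⊆ M`. -/
def multiplierRing (𝔞 : Submodule ℤ M) : Subring M where
  carrier := {α : M | ∀ x ∈ 𝔞, α * x ∈ 𝔞}
  mul_mem' := fun {a b} ha hb x hx => by rw [mul_assoc]; exact ha _ (hb x hx)
  one_mem' := fun x hx => by simpa using hx
  add_mem' := fun {a b} ha hb x hx => by rw [add_mul]; exact 𝔞.add_mem (ha x hx) (hb x hx)
  zero_mem' := fun x hx => by simpa using 𝔞.zero_mem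
  neg_mem' := fun {a} ha x hx => by rw [neg_mul]; exact 𝔞.neg_mem (ha x hx)

/-- A `ℤ`-lattice `𝔞 ⊆ M`, viewed as a module over its multiplier ring `R(𝔞)`. -/
def latticeModule (𝔞 : Submodule ℤ M) : Submodule (multiplierRing M 𝔞) M where
  carrier := 𝔞
  add_mem' := fun ha hb => 𝔞.add_mem ha hb
  zero_mem' := 𝔞.zero_mem
  smul_mem' := fun r x hx => by
    rw [Subring.smul_def]
    exact r.2 x hx

private lemma rat_num_eq' (P : ℚ) : (P.num : ℚ) = P * (P.den : ℚ) :=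
  (div_eq_iff (by exact_mod_cast P.den_ne_zero : ((P.den : ℕ) : ℚ) ≠ 0)).mp (Rat.num_div_den P)

lemma exists_rat_quadratic' (hdeg : Module.finrank ℚ M = 2) (τ : M)
    (hirr : ∀ q : ℚ, τ ≠ (q : M)) :
    ∃ P Q R : ℚ, P ≠ 0 ∧ (P:M) * τ^2 + (Q:M) * τ + (R:M) = 0 := by
  have hnli : ¬ LinearIndependent ℚ (fun i : Fin 3 => τ ^ (i : ℕ)) := by
    intro h
    have := h.fintype_card_le_finrank
    simp [hdeg] at this
  obtain ⟨g, hsum, i, hgi⟩ := Fintype.not_linearIndependent_iff.mp hnli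
  rw [Fin.sum_univ_three] at hsum
  simp only [Fin.val_zero, Fin.val_one, Fin.val_two, pow_zero, pow_one, pow_two,
    Rat.smul_def, mul_one] at hsum
  by_cases h2 : g 2 = 0
  · exfalso
    rw [h2] at hsum
    simp only [Rat.cast_zero, zero_mul, add_zero] at hsum
    by_cases h1 : g 1 = 0
    · rw [h1] at hsum
      simp only [Rat.cast_zero, zero_mul, add_zero] at hsum
      have h0 : g 0 = 0 := by exact_mod_cast hsum
      fin_cases i <;> simp_all
    · apply hirr (-(g 0) / g 1)
      have hg1 : ((g 1 : ℚ) : M) ≠ 0 := by exact_mod_cast h1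
      push_cast
      rw [eq_div_iff hg1]
      linear_combination hsum
  · exact ⟨g 2, g 1, g 0, h2, by linear_combination hsum⟩

lemma exists_int_quadratic' (τ : M) (P Q R : ℚ) (hP : P ≠ 0)
    (hrel : (P:M) * τ^2 + (Q:M) * τ + (R:M) = 0) :
    ∃ a b c u v w : ℤ, a ≠ 0 ∧ (a:M) * τ^2 + (b:M) * τ + (c:M) = 0 ∧
      u * a + v * b + w * c = 1 := by
  set a₀ : ℤ := P.num * Q.den * R.den with ha₀def
  set b₀ : ℤ := P.den * Q.num * R.den with hb₀def
  set c₀ : ℤ := P.den * Q.den * R.num with hc₀def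
  set N : ℤ := (P.den : ℤ) * Q.den * R.den with hNdef
  have ha' : (a₀ : ℚ) = P * (N : ℚ) := by
    rw [ha₀def, hNdef]; push_cast
    linear_combination ((Q.den : ℚ) * (R.den : ℚ)) * rat_num_eq' P
  have hb' : (b₀ : ℚ) = Q * (N : ℚ) := by
    rw [hb₀def, hNdef]; push_cast
    linear_combination ((P.den : ℚ) * (R.den : ℚ)) * rat_num_eq' Q
  have hc' : (c₀ : ℚ) = R * (N : ℚ) := by
    rw [hc₀def, hNdef]; push_cast
    linear_combination ((P.den : ℚ) * (Q.den : ℚ)) * rat_num_eq' R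
  have castM : ∀ (z : ℤ) (q : ℚ), (z : ℚ) = q * (N : ℚ) → (z : M) = (q : M) * ((N : ℤ) : M) := by
    intro z q h
    have h2 : ((z : ℚ) : M) = ((q * (N : ℚ) : ℚ) : M) := by rw [h]
    push_cast at h2
    push_cast
    exact h2
  have hrel₀ : (a₀ : M) * τ^2 + (b₀ : M) * τ + (c₀ : M) = 0 := by
    rw [castM _ _ ha', castM _ _ hb', castM _ _ hc']
    linear_combination ((N : ℤ) : M) * hrel
  have ha₀ : a₀ ≠ 0 := by
    rw [ha₀def]
    have h1 : P.num ≠ 0 := Rat.num_ne_zero.mpr hP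
    have h2 : (Q.den : ℤ) ≠ 0 := by exact_mod_cast Q.den_ne_zero
    have h3 : (R.den : ℤ) ≠ 0 := by exact_mod_cast R.den_ne_zero
    exact mul_ne_zero (mul_ne_zero h1 h2) h3
  set g : ℤ := ((Int.gcd (Int.gcd a₀ b₀) c₀ : ℕ) : ℤ) with hgdef
  have hg0 : g ≠ 0 := by
    rw [hgdef]
    simp only [ne_eq, Int.natCast_eq_zero, Int.gcd_eq_zero_iff, not_and]
    intro h; exact absurd h.1 ha₀
  obtain ⟨a, ha⟩ : g ∣ a₀ := dvd_trans (Int.gcd_dvd_left _ _) (Int.gcd_dvd_left _ _)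
  obtain ⟨b, hb⟩ : g ∣ b₀ := dvd_trans (Int.gcd_dvd_left _ _) (Int.gcd_dvd_right _ _)
  obtain ⟨c, hc⟩ : g ∣ c₀ := Int.gcd_dvd_right _ _
  have hbez : ∃ u v w : ℤ, u * a₀ + v * b₀ + w * c₀ = g := by
    refine ⟨Int.gcdA a₀ b₀ * Int.gcdA (Int.gcd a₀ b₀) c₀,
      Int.gcdB a₀ b₀ * Int.gcdA (Int.gcd a₀ b₀) c₀, Int.gcdB (Int.gcd a₀ b₀) c₀, ?_⟩
    have h1 := Int.gcd_eq_gcd_ab a₀ b₀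
    have h2 := Int.gcd_eq_gcd_ab (Int.gcd a₀ b₀) c₀
    rw [hgdef, h2, h1]
    ring
  obtain ⟨u, v, w, huvw⟩ := hbez
  refine ⟨a, b, c, u, v, w, ?_, ?_, ?_⟩
  · intro h; apply ha₀; rw [ha, h, mul_zero]
  · have hgM : ((g : ℤ) : M) ≠ 0 := Int.cast_ne_zero.mpr hg0
    apply mul_left_cancel₀ hgM
    rw [mul_zero]
    push_cast [ha, hb, hc] at hrel₀ ⊢
    linear_combination hrel₀
  · apply mul_left_cancel₀ hg0
    rw [ha, hb, hc] at huvw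
    linear_combination huvw

lemma exists_lattice_basis' (hdeg : Module.finrank ℚ M = 2)
    (𝔞 : Submodule ℤ M) (hfg : 𝔞.FG) (hspan : Submodule.span ℚ (𝔞 : Set M) = ⊤) :
    ∃ ω₁ ω₂ : M, ω₁ ∈ 𝔞 ∧ ω₂ ∈ 𝔞 ∧
      (∀ z ∈ 𝔞, ∃ m n : ℤ, m • ω₁ + n • ω₂ = z) ∧ ω₁ ≠ 0 ∧
      (∀ q : ℚ, ω₂ ≠ (q : M) * ω₁) := by
  haveI : Module.Finite ℤ ↥𝔞 := Module.Finite.iff_fg.mpr hfg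
  haveI : NoZeroSMulDivisors ℤ M := by
    constructor
    intro z x h
    rcases eq_or_ne z 0 with hz | hz
    · exact Or.inl hz
    · right
      have h' : (z : M) * x = 0 := by rw [← zsmul_eq_mul]; exact h
      rcases mul_eq_zero.mp h' with h'' | h''
      · exact absurd (Int.cast_eq_zero.mp h'') hz
      · exact h''
  haveI : Module.Free ℤ ↥𝔞 := Module.free_of_finite_type_torsion_free'
  set ι := Module.Free.ChooseBasisIndex ℤ ↥𝔞 with hι
  let b : Module.Basis ι ℤ ↥𝔞 := Module.Free.chooseBasis ℤ ↥𝔞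
  set v : ι → M := fun i => ((b i : ↥𝔞) : M) with hv
  have hvind : LinearIndependent ℤ v :=
    LinearIndependent.map' b.linearIndependent 𝔞.subtype (Submodule.ker_subtype 𝔞)
  have hvq : LinearIndependent ℚ v :=
    (LinearIndependent.iff_fractionRing (R := ℤ) (K := ℚ)).mp hvind
  have hsp : Submodule.span ℤ (Set.range v) = 𝔞 := by
    have h1 : Submodule.span ℤ (Set.range (fun i => b i)) = (⊤ : Submodule ℤ ↥𝔞) := b.span_eq
    have h2 := congrArg (Submodule.map 𝔞.subtype) h1
    rwa [Submodule.map_span, Submodule.map_top, Submodule.range_subtype,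
      ← Set.range_comp] at h2
  have hspq : Submodule.span ℚ (Set.range v) = ⊤ := by
    rw [eq_top_iff, ← hspan, Submodule.span_le]
    intro x hx
    rw [← hsp] at hx
    have hle : Submodule.span ℤ (Set.range v) ≤
        (Submodule.span ℚ (Set.range v)).restrictScalars ℤ :=
      Submodule.span_le.mpr (fun y hy => Submodule.subset_span hy)
    exact hle hx
  have hcard : Fintype.card ι = 2 := by
    have hle : Fintype.card ι ≤ 2 := by
      have h3 := hvq.fintype_card_le_finrank
      rwa [hdeg] at h3
    have hge : 2 ≤ Fintype.card ι := by
      have h1 : Module.finrank ℚ (Submodule.span ℚ (Set.range v)) ≤ Fintype.card ι :=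
        finrank_range_le_card v
      rw [hspq, finrank_top] at h1
      rwa [hdeg] at h1
    omega
  let e : ι ≃ Fin 2 := Fintype.equivFinOfCardEq hcard
  set ω₁ : M := v (e.symm 0) with hω₁def
  set ω₂ : M := v (e.symm 1) with hω₂def
  have hrange : Set.range v = {ω₁, ω₂} := by
    ext x
    constructor
    · rintro ⟨i, rfl⟩
      have hei : e i = 0 ∨ e i = 1 := by omega
      rcases hei with h | h
      · left; rw [hω₁def, ← h, Equiv.symm_apply_apply]
      · right; rw [hω₂def, ← h, Equiv.symm_apply_apply]; rfl
    · rintro (rfl | rfl)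
      · exact ⟨e.symm 0, rfl⟩
      · exact ⟨e.symm 1, rfl⟩
  have hpair : ∀ z ∈ 𝔞, ∃ m n : ℤ, m • ω₁ + n • ω₂ = z := by
    intro z hz
    rw [← hsp, hrange] at hz
    exact Submodule.mem_span_pair.mp hz
  have hqe : LinearIndependent ℚ (v ∘ e.symm) := hvq.comp e.symm e.symm.injective
  have hω₁0 : ω₁ ≠ 0 := hqe.ne_zero 0
  have hirr : ∀ q : ℚ, ω₂ ≠ (q : M) * ω₁ := by
    intro q hq
    have h0 : (-q) • (v ∘ e.symm) 0 + (1 : ℚ) • (v ∘ e.symm) 1 = 0 := by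
      show (-q) • ω₁ + (1:ℚ) • ω₂ = 0
      rw [hq, Rat.smul_def, Rat.smul_def]
      push_cast
      ring
    have h1 := Fintype.linearIndependent_iff.mp hqe ![(-q), 1] ?_ 1
    · simp at h1
    · rw [Fin.sum_univ_two]
      simpa using h0
  exact ⟨ω₁, ω₂, (b (e.symm 0)).2, (b (e.symm 1)).2, hpair, hω₁0, hirr⟩

set_option synthInstance.maxHeartbeats 1000000 in
set_option maxHeartbeats 2000000 in
/-- Let `M` be an imaginary quadratic field.  For every `ℤ`-lattice `𝔞` in
`M`, the multiplier ring `R(𝔞) = {α ∈ M : α𝔞 ⊆ 𝔞}` is an order of `M` (a subring, finitely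
generated over `ℤ`, spanning `M` over `ℚ`), and `𝔞` is projective as an `R(𝔞)`-module. -/
theorem multiplierRing_isOrder_and_projective
    (hdeg : Module.finrank ℚ M = 2) (himag : IsEmpty (M →+* ℝ))
    (𝔞 : Submodule ℤ M) (hfg : 𝔞.FG) (hspan : Submodule.span ℚ (𝔞 : Set M) = ⊤) :
    Module.Finite ℤ (multiplierRing M 𝔞) ∧
    Submodule.span ℚ ((multiplierRing M 𝔞 : Subring M) : Set M) = ⊤ ∧
    Module.Projective (multiplierRing M 𝔞) (latticeModule M 𝔞) := by
  classical
  obtain ⟨ω₁, ω₂, hω₁mem, hω₂mem, hpair, hω₁0, hirr⟩ :=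
    exists_lattice_basis' M hdeg 𝔞 hfg hspan
  set W : M := ω₁⁻¹ with hWdef
  set τ : M := ω₂ * W with hτdef
  have hWω₁ : W * ω₁ = 1 := inv_mul_cancel₀ hω₁0
  have hτω : τ * ω₁ = ω₂ := by
    rw [hτdef, mul_assoc, hWω₁, mul_one]
  have hτirr : ∀ q : ℚ, τ ≠ (q : M) := by
    intro q hq
    apply hirr q
    rw [← hτω, hq]
  obtain ⟨P, Q, R, hP, hPQR⟩ := exists_rat_quadratic' M hdeg τ hτirr
  obtain ⟨a, b, c, u, v, w, ha0, hquad, huvw⟩ := exists_int_quadratic' M τ P Q R hP hPQR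
  have hbez' : (u : M) * a + (v : M) * b + (w : M) * c = 1 := by
    have h := congrArg (fun z : ℤ => (z : M)) huvw
    push_cast at h
    exact h
  -- membership criteria
  have hmem : ∀ x : M, x ∈ multiplierRing M 𝔞 ↔ ∀ y ∈ 𝔞, x * y ∈ 𝔞 := fun x => Iff.rfl
  have hmul𝔞 : ∀ x : M, x * ω₁ ∈ 𝔞 → x * ω₂ ∈ 𝔞 → ∀ z ∈ 𝔞, x * z ∈ 𝔞 := by
    intro x h1 h2 z hz
    obtain ⟨m, n, rfl⟩ := hpair z hz
    rw [mul_add, mul_smul_comm, mul_smul_comm]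
    exact 𝔞.add_mem (𝔞.smul_mem m h1) (𝔞.smul_mem n h2)
  have hmulO : ∀ x : M, x * ω₁ ∈ multiplierRing M 𝔞 → x * ω₂ ∈ multiplierRing M 𝔞 →
      ∀ z ∈ 𝔞, x * z ∈ multiplierRing M 𝔞 := by
    intro x h1 h2 z hz
    obtain ⟨m, n, rfl⟩ := hpair z hz
    rw [mul_add, mul_smul_comm, mul_smul_comm]
    exact add_mem (zsmul_mem h1 m) (zsmul_mem h2 n)
  have hint : ∀ n : ℤ, ((n : ℤ) : M) ∈ multiplierRing M 𝔞 := fun n =>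
    intCast_mem (multiplierRing M 𝔞) n
  -- aτ is in the multiplier ring
  have hAτO : (a : M) * τ ∈ multiplierRing M 𝔞 := by
    rw [hmem]
    apply hmul𝔞
    · have : ((a : M) * τ) * ω₁ = a • ω₂ := by
        rw [mul_assoc, hτω, zsmul_eq_mul]
      rw [this]
      exact 𝔞.smul_mem a hω₂mem
    · have : ((a : M) * τ) * ω₂ = (-c) • ω₁ + (-b) • ω₂ := by
        rw [zsmul_eq_mul, zsmul_eq_mul, ← hτω]
        push_cast
        linear_combination ω₁ * hquad
      rw [this]
      exact 𝔞.add_mem (𝔞.smul_mem _ hω₁mem) (𝔞.smul_mem _ hω₂mem)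
  refine ⟨?_, ?_, ?_⟩
  · -- finiteness over ℤ
    set O' : Submodule ℤ M := AddSubgroup.toIntSubmodule (multiplierRing M 𝔞).toAddSubgroup
      with hO'def
    let f : M →ₗ[ℤ] M := LinearMap.mulLeft ℤ W
    have hBfg : (𝔞.map f).FG := hfg.map f
    have hle : O' ≤ 𝔞.map f := by
      intro x hx
      refine ⟨x * ω₁, hx ω₁ hω₁mem, ?_⟩
      show W * (x * ω₁) = x
      rw [mul_comm x ω₁, ← mul_assoc, hWω₁, one_mul]
    haveI : Module.Finite ℤ ↥(𝔞.map f) := Module.Finite.iff_fg.mpr hBfg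
    have hfg' : O'.FG := by
      have h1 : (O'.comap (𝔞.map f).subtype).FG := IsNoetherian.noetherian _
      have h2 := h1.map (𝔞.map f).subtype
      rwa [Submodule.map_comap_subtype, inf_eq_right.mpr hle] at h2
    haveI : Module.Finite ℤ ↥O' := Module.Finite.iff_fg.mpr hfg'
    exact Module.Finite.equiv
      ({ toFun := fun x => ⟨x.1, x.2⟩
         invFun := fun x => ⟨x.1, x.2⟩
         left_inv := fun x => rfl
         right_inv := fun x => rfl
         map_add' := fun x y => rfl
         map_smul' := fun z x => rfl } : ↥O' ≃ₗ[ℤ] ↥(multiplierRing M 𝔞))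
  · -- spanning over ℚ
    have hli : LinearIndependent ℚ ![(1:M), (a:M) * τ] := by
      rw [LinearIndependent.pair_iff]
      intro s t hst
      rw [Rat.smul_def, Rat.smul_def, mul_one] at hst
      have ht : t = 0 := by
        by_contra ht
        apply hτirr (-s / (t * (a : ℚ)))
        have h1 : ((t * (a : ℚ) : ℚ) : M) ≠ 0 := by
          rw [Rat.cast_ne_zero]
          exact mul_ne_zero ht (by exact_mod_cast ha0)
        push_cast at h1 ⊢
        rw [eq_div_iff h1]
        linear_combination hst
      rw [ht] at hst
      simp only [Rat.cast_zero, zero_mul, add_zero] at hst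
      exact ⟨by exact_mod_cast hst, ht⟩
    have hrange2 : Set.range ![(1:M), (a:M) * τ] = {(1:M), (a:M) * τ} := by
      ext x
      constructor
      · rintro ⟨i, rfl⟩
        fin_cases i
        · left; rfl
        · right; rfl
      · rintro (rfl | rfl)
        · exact ⟨0, rfl⟩
        · exact ⟨1, rfl⟩
    have hsp2 : Submodule.span ℚ {(1:M), (a:M) * τ} = ⊤ := by
      apply Submodule.eq_top_of_finrank_eq
      rw [← hrange2, finrank_span_eq_card hli, hdeg]
      rfl
    apply le_antisymm le_top
    rw [← hsp2]
    apply Submodule.span_le.mpr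
    rintro x (rfl | rfl)
    · exact Submodule.subset_span (one_mem (multiplierRing M 𝔞))
    · exact Submodule.subset_span hAτO
  · -- projectivity
    have hc1 : ∀ z ∈ 𝔞, ((u:M) * a * W) * z ∈ multiplierRing M 𝔞 := by
      apply hmulO
      · have e1 : ((u:M) * a * W) * ω₁ = ((u * a : ℤ) : M) := by
          rw [mul_assoc, hWω₁, mul_one]; push_cast; ring
        rw [e1]; exact hint _
      · have e2 : ((u:M) * a * W) * ω₂ = (u:M) * ((a:M) * τ) := by
          rw [hτdef]; ring
        rw [e2]; exact mul_mem (hint u) hAτO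
    have hc2 : ∀ z ∈ 𝔞, ((-(b:M) - (a:M) * τ) * W) * z ∈ multiplierRing M 𝔞 := by
      apply hmulO
      · have e1 : ((-(b:M) - (a:M) * τ) * W) * ω₁ = -(b:M) - (a:M) * τ := by
          rw [mul_assoc, hWω₁, mul_one]
        rw [e1]
        exact sub_mem (neg_mem (hint b)) hAτO
      · have e2 : ((-(b:M) - (a:M) * τ) * W) * ω₂ = ((c : ℤ) : M) := by
          have hWω₂ : W * ω₂ = τ := by rw [hτdef]; ring
          rw [mul_assoc, hWω₂]
          linear_combination -hquad
        rw [e2]; exact hint c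
    have hc3 : ∀ z ∈ 𝔞, ((a:M) * W) * z ∈ multiplierRing M 𝔞 := by
      apply hmulO
      · have e1 : ((a:M) * W) * ω₁ = ((a : ℤ) : M) := by rw [mul_assoc, hWω₁, mul_one]
        rw [e1]; exact hint a
      · have e2 : ((a:M) * W) * ω₂ = (a:M) * τ := by
          have hWω₂ : W * ω₂ = τ := by rw [hτdef]; ring
          rw [mul_assoc, hWω₂]
        rw [e2]; exact hAτO
    have hd1 : ω₁ ∈ 𝔞 := hω₁mem
    have hd2 : -(v:M) * ω₁ + (w:M) * ω₂ ∈ 𝔞 := by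
      have e1 : -(v:M) * ω₁ + (w:M) * ω₂ = (-v) • ω₁ + w • ω₂ := by
        rw [zsmul_eq_mul, zsmul_eq_mul]; push_cast; ring
      rw [e1]
      exact 𝔞.add_mem (𝔞.smul_mem _ hω₁mem) (𝔞.smul_mem _ hω₂mem)
    have hd3 : -(v:M) * ω₂ ∈ 𝔞 := by
      have e1 : -(v:M) * ω₂ = (-v) • ω₂ := by rw [zsmul_eq_mul]; push_cast; ring
      rw [e1]
      exact 𝔞.smul_mem _ hω₂mem
    have hsum : ((u:M) * a * W) * ω₁
        + ((-(b:M) - (a:M) * τ) * W) * (-(v:M) * ω₁ + (w:M) * ω₂)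
        + ((a:M) * W) * (-(v:M) * ω₂) = 1 := by
      rw [← hτω]
      linear_combination (W * ω₁) * hbez' - (w:M) * (W * ω₁) * hquad + hWω₁
    let cf : Fin 3 → M := ![(u:M) * a * W, (-(b:M) - (a:M) * τ) * W, (a:M) * W]
    have hcf : ∀ i : Fin 3, ∀ z ∈ 𝔞, cf i * z ∈ multiplierRing M 𝔞 := by
      intro i
      fin_cases i
      · exact hc1
      · exact hc2
      · exact hc3
    let dm : Fin 3 → ↥(latticeModule M 𝔞) :=
      ![⟨ω₁, hd1⟩, ⟨-(v:M) * ω₁ + (w:M) * ω₂, hd2⟩, ⟨-(v:M) * ω₂, hd3⟩]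
    let σ : ↥(latticeModule M 𝔞) →ₗ[multiplierRing M 𝔞] (Fin 3 → multiplierRing M 𝔞) :=
      { toFun := fun z i => ⟨cf i * (z : M), hcf i (z : M) z.2⟩
        map_add' := by
          intro x y
          funext i
          ext
          show cf i * ((x : M) + (y : M)) = cf i * (x : M) + cf i * (y : M)
          ring
        map_smul' := by
          intro r x
          funext i
          ext
          show cf i * ((r : M) * (x : M)) = (r : M) * (cf i * (x : M))
          ring }
    let π : (Fin 3 → multiplierRing M 𝔞) →ₗ[multiplierRing M 𝔞] ↥(latticeModule M 𝔞) :=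
      { toFun := fun g => g 0 • dm 0 + g 1 • dm 1 + g 2 • dm 2
        map_add' := by
          intro g h
          apply Subtype.ext
          simp only [Pi.add_apply, Submodule.coe_add, SetLike.val_smul, Subring.smul_def,
            Subring.coe_add, AddMemClass.coe_add, smul_eq_mul]
          push_cast
          ring
        map_smul' := by
          intro r g
          apply Subtype.ext
          simp only [Pi.smul_apply, smul_eq_mul, RingHom.id_apply, Submodule.coe_add,
            SetLike.val_smul, Subring.smul_def, MulMemClass.coe_mul, Subring.coe_mul]
          push_cast
          ring }
    have hH : π.comp σ = LinearMap.id := by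
      apply LinearMap.ext
      intro z
      apply Subtype.ext
      simp only [LinearMap.comp_apply, LinearMap.id_apply, LinearMap.coe_mk, AddHom.coe_mk,
        π, σ, cf, dm, Submodule.coe_add, SetLike.val_smul, Subring.smul_def,
        Matrix.cons_val_zero, Matrix.cons_val_one, Matrix.head_cons, smul_eq_mul,
        Matrix.cons_val_two, Matrix.tail_cons]
      linear_combination (z : M) * hsum
    haveI : Module.Projective (multiplierRing M 𝔞) (Fin 3 → multiplierRing M 𝔞) :=
      inferInstance
    exact Module.Projective.of_split σ π hH
end

section
/- For every order O of M, the ring class group Pic(O) — the group of O-projective (equivalently, invertible; equivalently, locally principal) fractional O-ideals in M modulo globally principal fractional ideals — is a finite group. -/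
set_option maxHeartbeats 1000000
set_option synthInstance.maxHeartbeats 400000

open FractionalIdeal NumberField
open scoped nonZeroDivisors

namespace RCG

variable {M : Type*} [Field M] [NumberField M] (O : Subring M)

theorem isIntegral_of_mem (hOfin : Module.Finite ℤ O) {x : M} (hx : x ∈ O) :
    IsIntegral ℤ x := by
  have : Algebra.IsIntegral ℤ O := Algebra.IsIntegral.of_finite ℤ O
  have h := this.isIntegral ⟨x, hx⟩
  exact h.map (O.subtype.toIntAlgHom)

theorem exists_int_smul_mem (hOspan : Submodule.span ℚ (O : Set M) = ⊤) (x : M) :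
    ∃ n : ℤ, n ≠ 0 ∧ (n : M) * x ∈ O := by
  have hx : x ∈ Submodule.span ℚ (O : Set M) := hOspan ▸ Submodule.mem_top
  induction hx using Submodule.span_induction with
  | mem y hy => exact ⟨1, one_ne_zero, by simpa using hy⟩
  | zero => exact ⟨1, one_ne_zero, by simpa using O.zero_mem⟩
  | add y z _ _ hy hz =>
    obtain ⟨n, hn, hny⟩ := hy
    obtain ⟨m, hm, hmz⟩ := hz
    refine ⟨n * m, mul_ne_zero hn hm, ?_⟩
    have : ((n * m : ℤ) : M) * (y + z) = (m : M) * ((n:M) * y) + (n : M) * ((m:M)*z) := by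
      push_cast; ring
    rw [this]
    exact O.add_mem (O.mul_mem (intCast_mem O m) hny) (O.mul_mem (intCast_mem O n) hmz)
  | smul q y _ hy =>
    obtain ⟨n, hn, hny⟩ := hy
    refine ⟨q.den * n, mul_ne_zero (by exact_mod_cast q.den_nz) hn, ?_⟩
    have : ((q.den * n : ℤ) : M) * (q • y) = (q.num : M) * ((n : M) * y) := by
      push_cast
      rw [Rat.smul_def]
      rw [show ((q.den : M) * n * ((q:M) * y)) = ((q.den : M) * (q : M)) * ((n:M) * y) by ring]
      congr 1
      rw [mul_comm, Rat.cast_def]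
      have hden : (q.den : M) ≠ 0 := by
        exact_mod_cast (Nat.cast_ne_zero (R := M)).mpr q.den_nz
      field_simp
    rw [this]
    exact O.mul_mem (intCast_mem O q.num) hny

theorem isFractionRing (hOspan : Submodule.span ℚ (O : Set M) = ⊤) :
    IsFractionRing O M := by
  constructor
  constructor
  · rintro ⟨y, hy⟩
    have hy0 : (y : M) ≠ 0 := by
      intro h
      exact nonZeroDivisors.ne_zero hy (Subtype.ext h)
    refine IsUnit.of_mul_eq_one (((y : M))⁻¹) ?_
    rw [Algebra.algebraMap_ofSubsemiring_apply]
    exact mul_inv_cancel₀ hy0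
  · intro z
    obtain ⟨n, hn, hnz⟩ := exists_int_smul_mem O hOspan z
    have hnO : ((n : M)) ∈ O := intCast_mem O n
    have hmem : (⟨(n : M), hnO⟩ : O) ∈ O⁰ := by
      refine mem_nonZeroDivisors_of_ne_zero ?_
      simp only [ne_eq, Subtype.ext_iff]
      exact_mod_cast hn
    refine ⟨⟨⟨(n:M) * z, hnz⟩, ⟨_, hmem⟩⟩, ?_⟩
    simp only [Algebra.algebraMap_ofSubsemiring_apply]
    exact (mul_comm _ _)
  · intro x y h
    simp only [Algebra.algebraMap_ofSubsemiring_apply] at h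
    exact ⟨1, by rw [Subtype.coe_injective h]⟩

/-- The extension of an `O`-submodule of `M` to an `𝓞 M`-submodule. -/
noncomputable def extS (I : Submodule O M) : Submodule (𝓞 M) M :=
  Submodule.span (𝓞 M) (I : Set M)

theorem extS_mul (X Y : Submodule O M) : extS O (X * Y) = extS O X * extS O Y := by
  apply le_antisymm
  · rw [extS, Submodule.span_le]
    intro r hr
    refine Submodule.mul_induction_on hr (fun m hm n hn => ?_) (fun x y hx hy => add_mem hx hy)
    exact Submodule.mul_mem_mul (Submodule.subset_span hm) (Submodule.subset_span hn)
  · rw [extS, extS, extS, Submodule.span_mul_span]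
    apply Submodule.span_mono
    rintro _ ⟨a, ha, b, hb, rfl⟩
    exact Submodule.mul_mem_mul ha hb

theorem mem_ringOfIntegers_range (hOfin : Module.Finite ℤ O) {x : M} (hx : x ∈ O) :
    ∃ y : 𝓞 M, algebraMap (𝓞 M) M y = x :=
  ⟨⟨x, isIntegral_of_mem O hOfin hx⟩, rfl⟩

theorem extS_one (hOfin : Module.Finite ℤ O) :
    extS O ((1 : FractionalIdeal O⁰ M) : Submodule O M) = 1 := by
  apply le_antisymm
  · rw [extS, Submodule.span_le]
    intro x hx
    rw [SetLike.mem_coe, FractionalIdeal.coe_one] at hx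
    obtain ⟨y, rfl⟩ := (Submodule.mem_one).mp hx
    obtain ⟨z, hz⟩ := mem_ringOfIntegers_range O hOfin y.2
    have : algebraMap O M y = algebraMap (𝓞 M) M z := by
      rw [hz, Algebra.algebraMap_ofSubsemiring_apply]
    rw [this]
    exact (Submodule.mem_one).mpr ⟨z, rfl⟩
  · intro x hx
    obtain ⟨y, rfl⟩ := (Submodule.mem_one).mp hx
    have h1 : algebraMap (𝓞 M) M y = algebraMap (𝓞 M) M y • (1 : M) := by simp
    have hmem : (1 : M) ∈ ((1 : FractionalIdeal O⁰ M) : Submodule O M) := by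
      rw [FractionalIdeal.coe_one]
      exact (Submodule.mem_one).mpr ⟨1, map_one _⟩
    rw [extS]
    have := Submodule.smul_mem (Submodule.span (𝓞 M) (((1 : FractionalIdeal O⁰ M) : Submodule O M) : Set M)) y
      (Submodule.subset_span hmem)
    simpa [Algebra.smul_def] using this

theorem extS_isFractional (hOfin : Module.Finite ℤ O) [IsFractionRing O M]
    (I : FractionalIdeal O⁰ M) : IsFractional (𝓞 M)⁰ (extS O (I : Submodule O M)) := by
  obtain ⟨a, haO, ha⟩ := I.isFractional
  have ha0 : (a : M) ≠ 0 := by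
    intro h
    exact nonZeroDivisors.ne_zero haO (Subtype.ext h)
  obtain ⟨b, hb⟩ := mem_ringOfIntegers_range O hOfin a.2
  refine ⟨b, mem_nonZeroDivisors_of_ne_zero ?_, ?_⟩
  · intro h
    rw [h] at hb
    exact ha0 (by simpa using hb.symm)
  · intro x hx
    -- the set of `x` with `b • x` integral is an `𝓞 M`-submodule containing `I`
    let T : Submodule (𝓞 M) M :=
      { carrier := {x : M | IsLocalization.IsInteger (𝓞 M) (b • x)}
        add_mem' := fun hx hy => by
          simpa [smul_add] using IsLocalization.isInteger_add hx hy
        zero_mem' := by simp [IsLocalization.isInteger_zero]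
        smul_mem' := fun c x hx => by
          show IsLocalization.IsInteger (𝓞 M) (b • c • x)
          have h : b • c • x = c • b • x := smul_comm _ _ _
          rw [h]
          exact IsLocalization.isInteger_smul hx }
    have hsub : extS O (I : Submodule O M) ≤ T := by
      rw [extS, Submodule.span_le]
      intro y hy
      have h1 : a • y ∈ O := by
        obtain ⟨c, hc⟩ := ha y hy
        rw [← hc]
        exact (c : O).2
      obtain ⟨z, hz⟩ := mem_ringOfIntegers_range O hOfin h1
      refine ⟨z, ?_⟩
      rw [hz, Algebra.smul_def, Algebra.smul_def, hb, Algebra.algebraMap_ofSubsemiring_apply]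
    exact hsub hx

/-- Extension of fractional ideals to the maximal order, as a monoid hom. -/
noncomputable def extHom (hOfin : Module.Finite ℤ O) [IsFractionRing O M] :
    FractionalIdeal O⁰ M →* FractionalIdeal (𝓞 M)⁰ M where
  toFun I := ⟨extS O (I : Submodule O M), extS_isFractional O hOfin I⟩
  map_one' := by
    apply FractionalIdeal.coeToSubmodule_injective
    simpa using extS_one O hOfin
  map_mul' I J := by
    apply FractionalIdeal.coeToSubmodule_injective
    show extS O ((I * J : FractionalIdeal O⁰ M) : Submodule O M)
      = (⟨extS O (I : Submodule O M), extS_isFractional O hOfin I⟩ *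
         ⟨extS O (J : Submodule O M), extS_isFractional O hOfin J⟩ :
          FractionalIdeal (𝓞 M)⁰ M)
    rw [FractionalIdeal.coe_mul, extS_mul]
    exact (FractionalIdeal.coe_mul (S := (𝓞 M)⁰) (⟨extS O (I : Submodule O M), extS_isFractional O hOfin I⟩ : FractionalIdeal (𝓞 M)⁰ M) (⟨extS O (J : Submodule O M), extS_isFractional O hOfin J⟩ : FractionalIdeal (𝓞 M)⁰ M)).symm

theorem coe_extHom (hOfin : Module.Finite ℤ O) [IsFractionRing O M]
    (I : FractionalIdeal O⁰ M) :
    (extHom O hOfin I : Submodule (𝓞 M) M) = extS O (I : Submodule O M) := rfl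

theorem extHom_spanSingleton (hOfin : Module.Finite ℤ O) [IsFractionRing O M] (x : M) :
    extHom O hOfin (spanSingleton O⁰ x) = spanSingleton (𝓞 M)⁰ x := by
  apply FractionalIdeal.coeToSubmodule_injective
  show extS O ((spanSingleton O⁰ x : FractionalIdeal O⁰ M) : Submodule O M)
    = ((spanSingleton (𝓞 M)⁰ x : FractionalIdeal (𝓞 M)⁰ M) : Submodule (𝓞 M) M)
  rw [FractionalIdeal.coe_spanSingleton, FractionalIdeal.coe_spanSingleton]
  apply le_antisymm
  · rw [extS, Submodule.span_le]
    intro y hy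
    rw [SetLike.mem_coe, Submodule.mem_span_singleton] at hy
    obtain ⟨c, rfl⟩ := hy
    obtain ⟨z, hz⟩ := mem_ringOfIntegers_range O hOfin c.2
    have : (c : O) • x = z • x := by
      rw [Algebra.smul_def, Algebra.smul_def, hz, Algebra.algebraMap_ofSubsemiring_apply]
    rw [this]
    exact Submodule.smul_mem _ z (Submodule.mem_span_singleton_self x)
  · rw [Submodule.span_le, Set.singleton_subset_iff, extS]
    exact Submodule.subset_span (Submodule.mem_span_singleton_self x)


variable (M) in
theorem mk_surjective [IsFractionRing O M] :
    Function.Surjective (ClassGroup.mk M : (FractionalIdeal O⁰ M)ˣ → ClassGroup O) := by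
  intro c
  induction c using QuotientGroup.induction_on with
  | H I =>
    refine ⟨Units.map (canonicalEquiv O⁰ (FractionRing O) M : _ →* _) I, ?_⟩
    rw [ClassGroup.mk_canonicalEquiv, ← ClassGroup.Quot_mk_eq_mk]
    rfl

/-- The homomorphism from invertible fractional `O`-ideals to the class group
of the maximal order. -/
noncomputable def phi (hOfin : Module.Finite ℤ O) [IsFractionRing O M] :
    (FractionalIdeal O⁰ M)ˣ →* ClassGroup (𝓞 M) :=
  (ClassGroup.mk (R := 𝓞 M) (K := M)).comp (Units.map (extHom O hOfin))

theorem ker_le_ker (hOfin : Module.Finite ℤ O) [IsFractionRing O M] :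
    (ClassGroup.mk M : (FractionalIdeal O⁰ M)ˣ →* ClassGroup O).ker ≤ (phi O hOfin).ker := by
  intro I hI
  rw [MonoidHom.mem_ker] at hI ⊢
  rw [ClassGroup.mk_eq_one_iff] at hI
  obtain ⟨x, hx⟩ := hI
  rw [phi, MonoidHom.comp_apply, ClassGroup.mk_eq_one_iff]
  refine ⟨x, ?_⟩
  show (extHom O hOfin (I : FractionalIdeal O⁰ M) : Submodule (𝓞 M) M) = _
  have hIx : (I : FractionalIdeal O⁰ M) = spanSingleton O⁰ x := by
    apply FractionalIdeal.coeToSubmodule_injective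
    show ((I : FractionalIdeal O⁰ M) : Submodule O M)
      = ((spanSingleton O⁰ x : FractionalIdeal O⁰ M) : Submodule O M)
    rw [FractionalIdeal.coe_spanSingleton]
    exact hx
  rw [hIx, extHom_spanSingleton, FractionalIdeal.coe_spanSingleton]

/-- The induced map on class groups. -/
noncomputable def f (hOfin : Module.Finite ℤ O) [IsFractionRing O M] :
    ClassGroup O →* ClassGroup (𝓞 M) :=
  (MonoidHom.liftOfSurjective _ (mk_surjective M O)) ⟨phi O hOfin, ker_le_ker O hOfin⟩

theorem f_mk (hOfin : Module.Finite ℤ O) [IsFractionRing O M]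
    (I : (FractionalIdeal O⁰ M)ˣ) :
    f O hOfin (ClassGroup.mk M I) = phi O hOfin I := by
  exact MonoidHom.liftOfRightInverse_comp_apply _ _ _ _ I


theorem exists_N (hOspan : Submodule.span ℚ (O : Set M) = ⊤) :
    ∃ N : ℤ, N ≠ 0 ∧ ∀ r : 𝓞 M, (N : M) * algebraMap (𝓞 M) M r ∈ O := by
  classical
  obtain ⟨s, hs⟩ := Module.finite_def.mp (inferInstance : Module.Finite ℤ (𝓞 M))
  choose n hn hmem using fun g : 𝓞 M =>
    exists_int_smul_mem O hOspan (algebraMap (𝓞 M) M g)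
  refine ⟨∏ g ∈ s, n g, Finset.prod_ne_zero_iff.mpr (fun g _ => hn g), ?_⟩
  intro r
  have hr : r ∈ Submodule.span ℤ (s : Set (𝓞 M)) := by rw [hs]; exact Submodule.mem_top
  have hr' : algebraMap (𝓞 M) M r ∈
      Submodule.span ℤ ((algebraMap (𝓞 M) M) '' (s : Set (𝓞 M))) := by
    have h2 : algebraMap (𝓞 M) M r ∈ Submodule.map
        ((Algebra.linearMap (𝓞 M) M).restrictScalars ℤ) (Submodule.span ℤ (s : Set (𝓞 M))) :=
      Submodule.mem_map_of_mem hr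
    rw [Submodule.map_span] at h2
    simpa [Algebra.coe_linearMap] using h2
  set N : ℤ := ∏ g ∈ s, n g with hN
  clear_value N
  generalize algebraMap (𝓞 M) M r = x at hr'
  induction hr' using Submodule.span_induction with
  | mem y hy =>
    obtain ⟨g, hg, rfl⟩ := hy
    have h1 : N = n g * ∏ h ∈ s.erase g, n h := by
      rw [hN, Finset.mul_prod_erase s n hg]
    have h2 : (N : M) * algebraMap (𝓞 M) M g
        = ((∏ h ∈ s.erase g, n h : ℤ) : M) * ((n g : M) * algebraMap (𝓞 M) M g) := by
      rw [h1]; push_cast; ring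
    rw [h2]
    exact O.mul_mem (intCast_mem O _) (hmem g)
  | zero => simpa using O.zero_mem
  | add y z _ _ hy hz =>
    rw [mul_add]
    exact O.add_mem hy hz
  | smul m y _ hy =>
    have : (N : M) * (m • y) = m • ((N : M) * y) := by
      rw [zsmul_eq_mul, zsmul_eq_mul]; ring
    rw [this]
    exact zsmul_mem hy m


section Kernel

variable (hOfin : Module.Finite ℤ O) [IsFractionRing O M]

theorem mem_range_of_ext_eq_one {B : (FractionalIdeal O⁰ M)ˣ}
    (hB : Units.map (extHom O hOfin) B = 1) {x : M}
    (hx : x ∈ (B : FractionalIdeal O⁰ M)) :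
    ∃ r : 𝓞 M, algebraMap (𝓞 M) M r = x := by
  have h1 : extHom O hOfin (B : FractionalIdeal O⁰ M) = 1 := by
    have := congrArg Units.val hB
    simpa using this
  have h2 : x ∈ extS O ((B : FractionalIdeal O⁰ M) : Submodule O M) :=
    Submodule.subset_span hx
  rw [← coe_extHom O hOfin, h1, FractionalIdeal.coe_one] at h2
  exact (Submodule.mem_one).mp h2

theorem conductor_mem {N : ℤ} (hN : ∀ r : 𝓞 M, (N : M) * algebraMap (𝓞 M) M r ∈ O)
    {B : (FractionalIdeal O⁰ M)ˣ} (hB : Units.map (extHom O hOfin) B = 1) (t : 𝓞 M) :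
    (N : M) * algebraMap (𝓞 M) M t ∈ (B : FractionalIdeal O⁰ M) := by
  have hBinv : Units.map (extHom O hOfin) B⁻¹ = 1 := by
    rw [_root_.map_inv, hB, inv_one]
  set X : Submodule O M := ((B : FractionalIdeal O⁰ M) : Submodule O M) with hX
  set Y : Submodule O M :=
    (((B⁻¹ : (FractionalIdeal O⁰ M)ˣ) : FractionalIdeal O⁰ M) : Submodule O M) with hY
  have hXY : X * Y = (1 : Submodule O M) := by
    rw [hX, hY, ← FractionalIdeal.coe_mul]
    norm_cast
    rw [mul_inv_cancel]
    exact FractionalIdeal.coe_one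
  set w : M := (N : M) * algebraMap (𝓞 M) M t with hw
  let P : Submodule O M :=
    { carrier := {z : M | w * z ∈ X}
      add_mem' := fun {a b} ha hb => by
        simp only [Set.mem_setOf_eq, mul_add] at *
        exact add_mem ha hb
      zero_mem' := by simp only [Set.mem_setOf_eq, mul_zero]; exact zero_mem X
      smul_mem' := fun c z hz => by
        show w * (c • z) ∈ X
        rw [mul_smul_comm]
        exact Submodule.smul_mem X c hz }
  have hP : X * Y ≤ P := by
    rw [Submodule.mul_le]
    intro a ha b hb
    obtain ⟨s, hs⟩ := mem_range_of_ext_eq_one O hOfin hBinv hb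
    have hos : w * b ∈ O := by
      rw [hw, ← hs, mul_assoc, ← _root_.map_mul]
      exact hN (t * s)
    show w * (a * b) ∈ X
    have h3 : w * (a * b) = (⟨w * b, hos⟩ : O) • a := by
      rw [Subring.smul_def]
      show w * (a * b) = (w * b) * a
      ring
    rw [h3]
    exact Submodule.smul_mem X _ ha
  have h1 : (1 : M) ∈ X * Y := by
    rw [hXY]
    exact (Submodule.mem_one).mpr ⟨1, map_one _⟩
  have h2 : w * 1 ∈ X := hP h1
  show w ∈ X
  rwa [mul_one] at h2

theorem rep_exists {c : ClassGroup O} (hc : f O hOfin c = 1) :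
    ∃ B : (FractionalIdeal O⁰ M)ˣ,
      ClassGroup.mk M B = c ∧ Units.map (extHom O hOfin) B = 1 := by
  obtain ⟨I, rfl⟩ := mk_surjective M O c
  rw [f_mk] at hc
  rw [phi, MonoidHom.comp_apply, ClassGroup.mk_eq_one_iff] at hc
  obtain ⟨x, hx⟩ := hc
  rw [Units.coe_map] at hx
  have hx0 : x ≠ 0 := by
    rintro rfl
    refine Units.ne_zero (Units.map (extHom O hOfin) I) ?_
    apply FractionalIdeal.coeToSubmodule_injective
    show ((Units.map (extHom O hOfin) I : FractionalIdeal (𝓞 M)⁰ M) : Submodule (𝓞 M) M)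
      = ((0 : FractionalIdeal (𝓞 M)⁰ M) : Submodule (𝓞 M) M)
    rw [Units.coe_map]
    show ((extHom O hOfin (I : FractionalIdeal O⁰ M) : FractionalIdeal (𝓞 M)⁰ M) :
        Submodule (𝓞 M) M) = _
    rw [hx, FractionalIdeal.coe_zero]
    exact Submodule.span_zero_singleton _
  have hIco : extHom O hOfin (I : FractionalIdeal O⁰ M) = spanSingleton (𝓞 M)⁰ x := by
    apply FractionalIdeal.coeToSubmodule_injective
    show ((extHom O hOfin (I : FractionalIdeal O⁰ M) : FractionalIdeal (𝓞 M)⁰ M) :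
        Submodule (𝓞 M) M)
      = ((spanSingleton (𝓞 M)⁰ x : FractionalIdeal (𝓞 M)⁰ M) : Submodule (𝓞 M) M)
    rw [FractionalIdeal.coe_spanSingleton]
    exact hx
  refine ⟨(toPrincipalIdeal O M (Units.mk0 x hx0))⁻¹ * I, ?_, ?_⟩
  · rw [_root_.map_mul, _root_.map_inv]
    have : ClassGroup.mk M (toPrincipalIdeal O M (Units.mk0 x hx0)) = 1 := by
      rw [ClassGroup.mk_eq_one_iff]
      refine ⟨⟨x, ?_⟩⟩
      show _ = Submodule.span O {x}
      rw [coe_toPrincipalIdeal]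
      show ((spanSingleton O⁰ x : FractionalIdeal O⁰ M) : Submodule O M) = _
      rw [FractionalIdeal.coe_spanSingleton]
    rw [this, inv_one, one_mul]
  · apply Units.ext
    show extHom O hOfin (((toPrincipalIdeal O M (Units.mk0 x hx0))⁻¹ * I :
        (FractionalIdeal O⁰ M)ˣ) : FractionalIdeal O⁰ M) = 1
    rw [Units.val_mul, _root_.map_mul, hIco, ← _root_.map_inv (toPrincipalIdeal O M)]
    have : (((toPrincipalIdeal O M (Units.mk0 x hx0)⁻¹) : (FractionalIdeal O⁰ M)ˣ) :
        FractionalIdeal O⁰ M) = spanSingleton O⁰ x⁻¹ := by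
      rw [coe_toPrincipalIdeal]
      rfl
    rw [this, extHom_spanSingleton, spanSingleton_mul_spanSingleton,
      inv_mul_cancel₀ hx0, spanSingleton_one]

theorem finite_ker (hOspan : Submodule.span ℚ (O : Set M) = ⊤) :
    Finite (f O hOfin).ker := by
  obtain ⟨N, hN0, hN⟩ := exists_N O hOspan
  have hNO : (N : 𝓞 M) ≠ 0 := by exact_mod_cast hN0
  haveI : Finite (𝓞 M ⧸ Ideal.span {(N : 𝓞 M)}) :=
    Ideal.finiteQuotientOfFreeOfNeBot _ (by
      rw [ne_eq, Ideal.span_singleton_eq_bot]; exact hNO)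
  have hrep : ∀ c : (f O hOfin).ker, ∃ B : (FractionalIdeal O⁰ M)ˣ,
      ClassGroup.mk M B = (c : ClassGroup O) ∧ Units.map (extHom O hOfin) B = 1 :=
    fun c => rep_exists O hOfin (MonoidHom.mem_ker.mp c.2)
  choose B hB1 hB2 using hrep
  let g : (f O hOfin).ker → Set (𝓞 M ⧸ Ideal.span {(N : 𝓞 M)}) := fun c =>
    (Ideal.Quotient.mk _) '' { r : 𝓞 M | algebraMap (𝓞 M) M r ∈ (B c : FractionalIdeal O⁰ M) }
  have hsub : ∀ c c', g c ⊆ g c' →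
      (B c : FractionalIdeal O⁰ M) ≤ (B c' : FractionalIdeal O⁰ M) := by
    intro c c' hcc x hx
    obtain ⟨r, rfl⟩ := mem_range_of_ext_eq_one O hOfin (hB2 c) hx
    have : Ideal.Quotient.mk (Ideal.span {(N : 𝓞 M)}) r ∈ g c := ⟨r, hx, rfl⟩
    obtain ⟨r', hr', hrr'⟩ := hcc this
    have hsubm : r - r' ∈ Ideal.span {(N : 𝓞 M)} := (Ideal.Quotient.eq).mp hrr'.symm
    obtain ⟨t, ht⟩ := Ideal.mem_span_singleton'.mp hsubm
    have hdecomp : algebraMap (𝓞 M) M r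
        = algebraMap (𝓞 M) M r' + (N : M) * algebraMap (𝓞 M) M t := by
      have : r = r' + t * (N : 𝓞 M) := by rw [ht]; ring
      rw [this, _root_.map_add, _root_.map_mul, map_intCast]
      ring
    rw [hdecomp]
    exact FractionalIdeal.mem_coe.mp (Submodule.add_mem _ (FractionalIdeal.mem_coe.mpr hr')
      (FractionalIdeal.mem_coe.mpr (conductor_mem O hOfin hN (hB2 c') t)))
  have hginj : Function.Injective g := by
    intro c c' h
    have hBeq : B c = B c' := by
      apply Units.ext
      apply le_antisymm (hsub c c' (le_of_eq h)) (hsub c' c (le_of_eq h.symm))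
    apply Subtype.ext
    rw [← hB1 c, ← hB1 c', hBeq]
  exact Finite.of_injective g hginj

end Kernel

end RCG


variable (M : Type*) [Field M] [NumberField M]

/-- Let `M` be an imaginary quadratic field.  For every order `O` of `M`,
the ring class group `Pic(O)` — invertible (equivalently, projective; equivalently, locally
principal) fractional `O`-ideals modulo principal fractional ideals — is finite. -/
theorem ringClassGroup_finite
    (hdeg : Module.finrank ℚ M = 2) (himag : IsEmpty (M →+* ℝ))
    (O : Subring M) (hOfin : Module.Finite ℤ O)
    (hOspan : Submodule.span ℚ (O : Set M) = ⊤) :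
    Finite (ClassGroup O) := by
  haveI := RCG.isFractionRing O hOspan
  haveI h1 : Finite (RCG.f O hOfin).ker := RCG.finite_ker O hOfin hOspan
  haveI h2 : Finite (ClassGroup O ⧸ (RCG.f O hOfin).ker) :=
    Finite.of_injective _ (QuotientGroup.kerLift_injective (RCG.f O hOfin))
  exact Finite.of_equiv _ (Subgroup.groupEquivQuotientProdSubgroup
    (s := (RCG.f O hOfin).ker)).symm
end
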